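/- arXiv:1304.2458 — 6 statements merged into one kernel-verified Lean document; each statement's English description precedes it below -/
import Mathlib

section
/- Let S be a real skew-symmetric n×n matrix and write its characteristic polynomial as Σ_{i=0}^{⌊n/2⌋} a_{2i} x^{n-2i}. Then a_{2i} ≥ 0 for every i with 0 ≤ i ≤ ⌊n/2⌋. -/
open Matrix Polynomial

private lemma coeff_mul_nonneg' {p q : Polynomial ℝ} (hp : ∀ k, 0 ≤ p.coeff k)
    (hq : ∀ k, 0 ≤ q.coeff k) (k : ℕ) : 0 ≤ (p * q).coeff k := by
  rw [coeff_mul]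
  exact Finset.sum_nonneg fun x _ => mul_nonneg (hp _) (hq _)

private lemma aux_prod (M : Multiset ℂ) (him : ∀ μ ∈ M, μ.re = 0)
    (hneg : M.map (fun z => -z) = M) :
    ∃ q : Polynomial ℝ, (∀ k, 0 ≤ q.coeff k) ∧
      (M.map (fun μ => X - C μ)).prod = q.map (algebraMap ℝ ℂ) := by
  induction M using Multiset.strongInductionOn with
  | ih M ih =>
  rcases Multiset.empty_or_exists_mem M with h | ⟨μ, hμ⟩
  · subst h
    exact ⟨1, fun k => by rw [coeff_one]; split_ifs <;> norm_num, by simp⟩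
  by_cases h0 : μ = 0
  · subst h0
    set M' := M.erase 0 with hM'
    have hcons : M = (0 : ℂ) ::ₘ M' := (Multiset.cons_erase hμ).symm
    have hneg' : M'.map (fun z => -z) = M' := by
      rw [hM', Multiset.map_erase _ neg_injective, hneg, neg_zero]
    have him' : ∀ ν ∈ M', ν.re = 0 := fun ν hν => him ν (Multiset.mem_of_mem_erase hν)
    obtain ⟨q, hq, hq2⟩ := ih M' (Multiset.erase_lt.2 hμ) him' hneg'
    refine ⟨X * q, coeff_mul_nonneg' (fun k => ?_) hq, ?_⟩
    · rw [coeff_X]; split_ifs <;> norm_num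
    · rw [hcons, Multiset.map_cons, Multiset.prod_cons, hq2, Polynomial.map_mul,
        Polynomial.map_X, C_0, sub_zero]
  · have hmem : -μ ∈ M := by
      rw [← hneg]; exact Multiset.mem_map_of_mem _ hμ
    have hne : -μ ≠ μ := fun h => h0 (by
      have : μ + μ = 0 := by linear_combination -h
      exact add_self_eq_zero.mp this)
    have hmem2 : -μ ∈ M.erase μ := (Multiset.mem_erase_of_ne hne).2 hmem
    set M' := (M.erase μ).erase (-μ) with hM'
    have hcons : M = μ ::ₘ (-μ) ::ₘ M' := by
      rw [hM', Multiset.cons_erase hmem2, Multiset.cons_erase hμ]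
    have hneg' : M'.map (fun z => -z) = M' := by
      rw [hM', Multiset.map_erase _ neg_injective, Multiset.map_erase _ neg_injective,
        hneg, neg_neg, Multiset.erase_comm]
    have him' : ∀ ν ∈ M', ν.re = 0 := fun ν hν =>
      him ν (Multiset.mem_of_mem_erase (Multiset.mem_of_mem_erase hν))
    obtain ⟨q, hq, hq2⟩ := ih M' (lt_of_le_of_lt (Multiset.erase_le _ _)
      (Multiset.erase_lt.2 hμ)) him' hneg'
    refine ⟨(X ^ 2 + C (μ.im ^ 2)) * q, coeff_mul_nonneg' (fun k => ?_) hq, ?_⟩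
    · rw [coeff_add, coeff_X_pow, coeff_C]
      split_ifs <;> positivity
    · have hμeq : μ = (μ.im : ℂ) * Complex.I := by
        apply Complex.ext <;> simp [him μ hμ]
    /- (X - C μ) * (X - C (-μ)) = X^2 + C (μ.im^2) over ℂ -/
      rw [hcons, Multiset.map_cons, Multiset.map_cons, Multiset.prod_cons,
        Multiset.prod_cons, hq2, Polynomial.map_mul, Polynomial.map_add,
        Polynomial.map_pow, Polynomial.map_X, map_C, ← mul_assoc]
      congr 1
      have : (algebraMap ℝ ℂ) (μ.im ^ 2) = -μ ^ 2 := by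
        have h2 : μ ^ 2 = -((μ.im : ℂ)) ^ 2 := by
          conv_lhs => rw [hμeq]
          rw [mul_pow, Complex.I_sq]; ring
        rw [h2, neg_neg, Complex.coe_algebraMap]; push_cast; ring
      rw [this]
      simp only [map_neg, map_pow]
      ring

private lemma eval_charpoly' {n : ℕ} (A : Matrix (Fin n) (Fin n) ℂ) (μ : ℂ) :
    A.charpoly.eval μ = (Matrix.diagonal (fun _ : Fin n => μ) - A).det := by
  rw [Matrix.charpoly, ← Polynomial.coe_evalRingHom, RingHom.map_det]
  congr 1
  ext i j
  by_cases h : i = j <;>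
    simp [h, Matrix.charmatrix_apply, Matrix.map_apply, Matrix.sub_apply, Matrix.diagonal_apply]

/-- If `S` is a real skew-symmetric matrix with characteristic polynomial
`∑_{i=0}^{⌊n/2⌋} a_{2i} x^{n-2i}`, then `a_{2i} ≥ 0` for all `0 ≤ i ≤ ⌊n/2⌋`.
Here `a_{2i}` is the coefficient of `x^{n-2i}`. -/
theorem skew_symmetric_charpoly_even_coeff_nonneg
    {n : ℕ} (S : Matrix (Fin n) (Fin n) ℝ) (hskew : Sᵀ = -S)
    (i : ℕ) (hi : i ≤ n / 2) :
    0 ≤ S.charpoly.coeff (n - 2 * i) := by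
  suffices h : ∀ k, 0 ≤ S.charpoly.coeff k from h _
  intro k
  set p := S.charpoly with hp
  set A := S.map (algebraMap ℝ ℂ) with hA
  have hP : A.charpoly = p.map (algebraMap ℝ ℂ) := Matrix.charpoly_map S _
  have hPmonic : A.charpoly.Monic := A.charpoly_monic
  have hskew' : ∀ i j, S j i = -S i j := by
    intro i j
    have := congrFun (congrFun hskew i) j
    simpa [Matrix.transpose_apply, Matrix.neg_apply] using this
  -- all complex roots of the charpoly are purely imaginary
  have him : ∀ μ ∈ A.charpoly.roots, μ.re = 0 := by
    intro μ hμ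
    have hroot : A.charpoly.IsRoot μ := isRoot_of_mem_roots hμ
    have hdet : (Matrix.diagonal (fun _ : Fin n => μ) - A).det = 0 := by
      rw [← eval_charpoly']
      exact hroot
    obtain ⟨v, hv0, hv⟩ := Matrix.exists_mulVec_eq_zero_iff.2 hdet
    have hAv : ∀ i, (∑ j, (algebraMap ℝ ℂ) (S i j) * v j) = μ * v i := by
      intro i
      have h1 := congrFun hv i
      simp only [Matrix.sub_mulVec, Pi.sub_apply, Pi.zero_apply, sub_eq_zero] at h1
      have h2 : (Matrix.diagonal (fun _ : Fin n => μ) *ᵥ v) i = μ * v i := by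
        simp [Matrix.mulVec_diagonal]
      have h3 : (A *ᵥ v) i = ∑ j, (algebraMap ℝ ℂ) (S i j) * v j := by
        simp [Matrix.mulVec, dotProduct, hA, Matrix.map_apply]
      rw [← h3, ← h2, h1]
    set s := ∑ i, (starRingEnd ℂ) (v i) * v i with hs
    set c := ∑ i, ∑ j, (starRingEnd ℂ) (v i) * ((algebraMap ℝ ℂ) (S i j) * v j) with hc
    have h1 : c = μ * s := by
      rw [hc, hs, Finset.mul_sum]
      refine Finset.sum_congr rfl fun i _ => ?_
      rw [← Finset.mul_sum, hAv i]
      ring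
    have h2 : (starRingEnd ℂ) c = -c := by
      have hterm : ∀ i j, (starRingEnd ℂ)
          ((starRingEnd ℂ) (v i) * ((algebraMap ℝ ℂ) (S i j) * v j))
          = -((starRingEnd ℂ) (v j) * ((algebraMap ℝ ℂ) (S j i) * v i)) := by
        intro i j
        have ha : ((algebraMap ℝ ℂ) (S j i)) = -((algebraMap ℝ ℂ) (S i j)) := by
          rw [hskew' i j, map_neg]
        have hb : (starRingEnd ℂ) ((algebraMap ℝ ℂ) (S i j)) = (algebraMap ℝ ℂ) (S i j) := by
          simp [Complex.conj_ofReal]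
        rw [_root_.map_mul, _root_.map_mul, Complex.conj_conj, hb, ha]
        ring
      rw [hc, map_sum]
      simp only [map_sum, hterm, Finset.sum_neg_distrib]
      rw [Finset.sum_comm]
    have hscast : s = ((∑ i, Complex.normSq (v i) : ℝ) : ℂ) := by
      rw [hs]
      push_cast
      refine Finset.sum_congr rfl fun i _ => ?_
      rw [Complex.normSq_eq_conj_mul_self]
    have hspos : (0 : ℝ) < ∑ i, Complex.normSq (v i) := by
      obtain ⟨i0, hi0⟩ := Function.ne_iff.1 hv0
      refine Finset.sum_pos' (fun i _ => Complex.normSq_nonneg _) ⟨i0, Finset.mem_univ _, ?_⟩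
      exact Complex.normSq_pos.2 hi0
    have hsne : s ≠ 0 := by
      rw [hscast]
      exact_mod_cast hspos.ne'
    have hconjs : (starRingEnd ℂ) s = s := by
      rw [hscast, Complex.conj_ofReal]
    have hkey : ((starRingEnd ℂ) μ + μ) * s = 0 := by
      have := h2
      rw [h1, _root_.map_mul, hconjs] at this
      linear_combination this
    have hzero : (starRingEnd ℂ) μ + μ = 0 := by
      rcases mul_eq_zero.1 hkey with h | h
      · exact h
      · exact absurd h hsne
    have h4 : ((2 * μ.re : ℝ) : ℂ) = 0 := by
      rw [← Complex.add_conj]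
      linear_combination hzero
    have h5 : (2 * μ.re : ℝ) = 0 := by exact_mod_cast h4
    linarith
  have hsplit : A.charpoly.Splits := IsAlgClosed.splits _
  have hstar : (A.charpoly).map (starRingEnd ℂ) = A.charpoly := by
    rw [hP, Polynomial.map_map]
    congr 1
    refine RingHom.ext fun x => ?_
    simp [Complex.conj_ofReal]
  have hconj := hsplit.roots_map (starRingEnd ℂ)
  rw [hstar] at hconj
  have hnegr : A.charpoly.roots.map (fun z => -z) = A.charpoly.roots := by
    have heq : A.charpoly.roots.map (fun z => -z) = A.charpoly.roots.map (starRingEnd ℂ) := by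
      refine Multiset.map_congr rfl fun μ hμ => ?_
      have h := him μ hμ
      apply Complex.ext <;> simp [h]
    rw [heq, ← hconj]
  have hfact : A.charpoly = (A.charpoly.roots.map (fun μ => X - C μ)).prod :=
    hsplit.eq_prod_roots_of_monic hPmonic
  obtain ⟨q, hq, hq2⟩ := aux_prod A.charpoly.roots him hnegr
  have hmapeq : p.map (algebraMap ℝ ℂ) = q.map (algebraMap ℝ ℂ) := by
    rw [← hP, hfact, hq2]
  have hpq : p = q := Polynomial.map_injective _ (algebraMap ℝ ℂ).injective hmapeq
  rw [hpq]
  exact hq _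
end

section
/- Let G^σ be an oriented graph on n vertices with skew characteristic polynomial Σ_{i=0}^n (-1)^i a_i λ^{n-i}. Then a_4 ≥ M(G,2) - 2q(G), where M(G,2) is the number of 2-matchings in the underlying graph G and q(G) is the number of quadrangles (4-cycles) in G. Equality holds if and only if every quadrangle of G is evenly oriented under σ. -/
open Matrix Polynomial Finset

/-- The number of 2-matchings (pairs of disjoint edges) of a simple graph. -/
noncomputable def twoMatchingCount {n : ℕ} (G : SimpleGraph (Fin n)) : ℕ :=
  letI := Classical.decRel G.Adj
  ((G.edgeFinset.powersetCard 2).filter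
    (fun s => ∀ e ∈ s, ∀ f ∈ s, e ≠ f → ∀ v : Fin n, ¬ (v ∈ e ∧ v ∈ f))).card

/-- The number of quadrangles (4-cycles) of a simple graph: each 4-cycle corresponds
to exactly 8 cyclically adjacent quadruples of distinct vertices. -/
noncomputable def quadCount {n : ℕ} (G : SimpleGraph (Fin n)) : ℕ :=
  letI := Classical.decRel G.Adj
  (Finset.univ.filter (fun p : Fin n × Fin n × Fin n × Fin n =>
      p.1 ≠ p.2.1 ∧ p.1 ≠ p.2.2.1 ∧ p.1 ≠ p.2.2.2 ∧ p.2.1 ≠ p.2.2.1 ∧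
      p.2.1 ≠ p.2.2.2 ∧ p.2.2.1 ≠ p.2.2.2 ∧
      G.Adj p.1 p.2.1 ∧ G.Adj p.2.1 p.2.2.1 ∧ G.Adj p.2.2.1 p.2.2.2 ∧
      G.Adj p.2.2.2 p.1)).card / 8


lemma coeff_lemma {n : ℕ} (hn : 4 ≤ n) (S : Matrix (Fin n) (Fin n) ℝ)
    (hdiag : ∀ i, S i i = 0) :
    S.charpoly.coeff (n - 4) =
      ∑ σ ∈ Finset.univ.filter (fun σ : Equiv.Perm (Fin n) => σ.support.card = 4),
        ((Equiv.Perm.sign σ : ℤ) : ℝ) * ∏ i ∈ σ.support, S (σ i) i := by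
  rw [Matrix.charpoly, Matrix.det_apply, Polynomial.finset_sum_coeff]
  rw [Finset.sum_filter]
  refine Finset.sum_congr rfl ?_
  intro σ _
  have hsupp : σ.support ⊆ Finset.univ := Finset.subset_univ _
  have hprod : ∏ i : Fin n, charmatrix S (σ i) i
      = (Polynomial.C (∏ i ∈ σ.support, (- S (σ i) i))) * X ^ (n - σ.support.card) := by
    rw [← Finset.prod_sdiff hsupp]
    have h1 : ∏ i ∈ Finset.univ \ σ.support, charmatrix S (σ i) i
        = X ^ (n - σ.support.card) := by
      rw [Finset.prod_congr rfl (fun i hi => ?_), Finset.prod_const,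
        Finset.card_sdiff_of_subset hsupp, Finset.card_univ, Fintype.card_fin]
      have hfix : σ i = i := by
        simpa using (Finset.mem_sdiff.mp hi).2
      rw [hfix, charmatrix_apply_eq, hdiag, map_zero, sub_zero]
    have h2 : ∏ i ∈ σ.support, charmatrix S (σ i) i
        = Polynomial.C (∏ i ∈ σ.support, (- S (σ i) i)) := by
      rw [map_prod]
      refine Finset.prod_congr rfl (fun i hi => ?_)
      have : σ i ≠ i := Equiv.Perm.mem_support.mp hi
      rw [charmatrix_apply_ne _ _ _ this, map_neg]
    rw [h1, h2, mul_comm]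
  rw [hprod, Polynomial.coeff_smul, Polynomial.coeff_C_mul, Polynomial.coeff_X_pow]
  have hcard : σ.support.card ≤ n := by
    simpa using Finset.card_le_card hsupp
  by_cases h4 : σ.support.card = 4
  · rw [if_pos h4, if_pos (by omega)]
    have : ∏ i ∈ σ.support, (- S (σ i) i) = ∏ i ∈ σ.support, S (σ i) i := by
      rw [show (fun i => - S (σ i) i) = (fun i => (-1) * S (σ i) i) by funext i; ring,
        Finset.prod_mul_distrib, Finset.prod_const, h4]
      norm_num
    rw [this, mul_one, Units.smul_def, zsmul_eq_mul]
  · rw [if_neg h4, if_neg (by omega), mul_zero, smul_zero]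

variable {α : Type*} [DecidableEq α] [Fintype α]

lemma prod4 {α β : Type*} [DecidableEq α] [CommMonoid β] (f : α → β) {a b c d : α}
    (hab : a≠b) (hac : a≠c) (had : a≠d) (hbc : b≠c) (hbd : b≠d) (hcd : c≠d) :
    ∏ i ∈ ({a,b,c,d} : Finset α), f i = f a * f b * f c * f d := by
  rw [Finset.prod_insert (by simp [hab, hac, had]),
    Finset.prod_insert (by simp [hbc, hbd]),
    Finset.prod_insert (by simp [hcd]), Finset.prod_singleton, mul_assoc, mul_assoc]



def c4 (a b c d : α) : Equiv.Perm α :=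
  Equiv.swap a b * Equiv.swap b c * Equiv.swap c d

variable {a b c d : α}

lemma c4_apply_a (hab : a≠b) (hac : a≠c) (had : a≠d) :
    c4 a b c d a = b := by
  simp [c4, Equiv.Perm.mul_apply, Equiv.swap_apply_of_ne_of_ne hac had,
    Equiv.swap_apply_of_ne_of_ne hab hac, Equiv.swap_apply_left]

lemma c4_apply_b (hac : a≠c) (hbc : b≠c) (hbd : b≠d) :
    c4 a b c d b = c := by
  simp [c4, Equiv.Perm.mul_apply, Equiv.swap_apply_of_ne_of_ne hbc hbd,
    Equiv.swap_apply_left, Equiv.swap_apply_right,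
    Equiv.swap_apply_of_ne_of_ne (Ne.symm hac) (Ne.symm hbc)]

lemma c4_apply_c (had : a≠d) (hbd : b≠d) (hcd : c≠d) :
    c4 a b c d c = d := by
  simp [c4, Equiv.Perm.mul_apply, Equiv.swap_apply_left,
    Equiv.swap_apply_of_ne_of_ne (Ne.symm hbd) (Ne.symm hcd),
    Equiv.swap_apply_of_ne_of_ne (Ne.symm had) (Ne.symm hbd)]

lemma c4_apply_d (hab : a≠b) (hac : a≠c) (hbc : b≠c) (hcd : c≠d) :
    c4 a b c d d = a := by
  simp [c4, Equiv.Perm.mul_apply, Equiv.swap_apply_right, Equiv.swap_apply_left]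

lemma c4_apply_other {x : α} (hxa : x≠a) (hxb : x≠b) (hxc : x≠c) (hxd : x≠d) :
    c4 a b c d x = x := by
  simp [c4, Equiv.Perm.mul_apply, Equiv.swap_apply_of_ne_of_ne hxc hxd,
    Equiv.swap_apply_of_ne_of_ne hxb hxc, Equiv.swap_apply_of_ne_of_ne hxa hxb]

lemma c4_support (hab : a≠b) (hac : a≠c) (had : a≠d) (hbc : b≠c) (hbd : b≠d) (hcd : c≠d) :
    (c4 a b c d).support = {a, b, c, d} := by
  ext x
  simp only [Equiv.Perm.mem_support, Finset.mem_insert, Finset.mem_singleton]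
  constructor
  · intro h
    by_contra hx
    push_neg at hx
    exact h (c4_apply_other hx.1 hx.2.1 hx.2.2.1 hx.2.2.2)
  · rintro (rfl | rfl | rfl | rfl)
    · rw [c4_apply_a hab hac had]; exact hab.symm
    · rw [c4_apply_b hac hbc hbd]; exact hbc.symm
    · rw [c4_apply_c had hbd hcd]; exact hcd.symm
    · rw [c4_apply_d hab hac hbc hcd]; exact Ne.symm (Ne.symm had)

lemma c4_isCycle (hab : a≠b) (hac : a≠c) (had : a≠d) (hbc : b≠c) (hbd : b≠d) (hcd : c≠d) :
    (c4 a b c d).IsCycle := by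
  refine ⟨a, by rw [c4_apply_a hab hac had]; exact hab.symm, ?_⟩
  intro y hy
  have hy' : y = a ∨ y = b ∨ y = c ∨ y = d := by
    by_contra hx
    push_neg at hx
    exact hy (c4_apply_other hx.1 hx.2.1 hx.2.2.1 hx.2.2.2)
  have h1 : (c4 a b c d) a = b := c4_apply_a hab hac had
  have h2 : (c4 a b c d) b = c := c4_apply_b hac hbc hbd
  have h3 : (c4 a b c d) c = d := c4_apply_c had hbd hcd
  rcases hy' with rfl | rfl | rfl | rfl
  · exact Equiv.Perm.SameCycle.refl _ _
  · exact ⟨1, by simpa using h1⟩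
  · exact ⟨2, by
      rw [show (2:ℤ) = ((2:ℕ):ℤ) by norm_num, zpow_natCast, pow_succ, pow_one,
        Equiv.Perm.mul_apply, h1, h2]⟩
  · exact ⟨3, by
      rw [show (3:ℤ) = ((3:ℕ):ℤ) by norm_num, zpow_natCast, pow_succ, pow_succ, pow_one,
        Equiv.Perm.mul_apply, Equiv.Perm.mul_apply, h1, h2, h3]⟩

lemma perm_ext_of {σ τ : Equiv.Perm α} {T : Finset α} (hs : σ.support ⊆ T)
    (ht : τ.support ⊆ T) (h : ∀ x ∈ T, σ x = τ x) : σ = τ := by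
  ext x
  by_cases hx : x ∈ T
  · exact h x hx
  · have h1 : σ x = x := by
      by_contra hc
      exact hx (hs (Equiv.Perm.mem_support.mpr hc))
    have h2 : τ x = x := by
      by_contra hc
      exact hx (ht (Equiv.Perm.mem_support.mpr hc))
    rw [h1, h2]

lemma cycle4_struct {σ : Equiv.Perm α} (hc : σ.IsCycle) (h4 : σ.support.card = 4)
    {a : α} (ha : a ∈ σ.support) :
    σ (σ (σ (σ a))) = a ∧ a ≠ σ a ∧ a ≠ σ (σ a) ∧ a ≠ σ (σ (σ a)) ∧
    σ a ≠ σ (σ a) ∧ σ a ≠ σ (σ (σ a)) ∧ σ (σ a) ≠ σ (σ (σ a)) ∧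
    σ.support = {a, σ a, σ (σ a), σ (σ (σ a))} := by
  have hord : orderOf σ = 4 := by rw [hc.orderOf, h4]
  have hσa : σ a ≠ a := Equiv.Perm.mem_support.mp ha
  have hpow : ∀ k : ℕ, 0 < k → k < 4 → (σ ^ k) a ≠ a := by
    intro k hk0 hk4 h
    have : σ ^ k = 1 := (hc.pow_eq_one_iff' hσa).mpr h
    have := orderOf_le_of_pow_eq_one hk0 this
    omega
  have h4' : σ (σ (σ (σ a))) = a := by
    have : σ ^ 4 = 1 := by rw [← hord]; exact pow_orderOf_eq_one σ
    have := DFunLike.congr_fun this a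
    simpa [pow_succ, Equiv.Perm.mul_apply] using this
  have e1 : (σ ^ 1) a = σ a := by simp
  have e2 : (σ ^ 2) a = σ (σ a) := by simp [pow_succ, Equiv.Perm.mul_apply]
  have e3 : (σ ^ 3) a = σ (σ (σ a)) := by simp [pow_succ, Equiv.Perm.mul_apply]
  have hab : a ≠ σ a := hσa.symm
  have hac : a ≠ σ (σ a) := by
    intro h; exact hpow 2 (by norm_num) (by norm_num) (by rw [e2, ← h])
  have had : a ≠ σ (σ (σ a)) := by
    intro h; exact hpow 3 (by norm_num) (by norm_num) (by rw [e3, ← h])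
  have hbc : σ a ≠ σ (σ a) := fun h => hab (σ.injective h) |>.elim
  have hbd : σ a ≠ σ (σ (σ a)) := fun h => hac (σ.injective h) |>.elim
  have hcd : σ (σ a) ≠ σ (σ (σ a)) := fun h => hbc (σ.injective h) |>.elim
  have hsub : ({a, σ a, σ (σ a), σ (σ (σ a))} : Finset α) ⊆ σ.support := by
    intro x hx
    simp only [Finset.mem_insert, Finset.mem_singleton] at hx
    rcases hx with rfl | rfl | rfl | rfl
    · exact ha
    · exact Equiv.Perm.apply_mem_support.mpr ha
    · exact Equiv.Perm.apply_mem_support.mpr (Equiv.Perm.apply_mem_support.mpr ha)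
    · exact Equiv.Perm.apply_mem_support.mpr
        (Equiv.Perm.apply_mem_support.mpr (Equiv.Perm.apply_mem_support.mpr ha))
  have hcard : ({a, σ a, σ (σ a), σ (σ (σ a))} : Finset α).card = 4 := by
    rw [Finset.card_insert_of_notMem (by simp [hab, hac, had]),
      Finset.card_insert_of_notMem (by simp [hbc, hbd]),
      Finset.card_insert_of_notMem (by simp [hcd]), Finset.card_singleton]
  have hsupp : σ.support = {a, σ a, σ (σ a), σ (σ (σ a))} :=
    (Finset.eq_of_subset_of_card_le hsub (by rw [h4, hcard])).symm
  exact ⟨h4', hab, hac, had, hbc, hbd, hcd, hsupp⟩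

section B
variable {n : ℕ}

open scoped Classical in
noncomputable def B3 {n : ℕ} (S : Matrix (Fin n) (Fin n) ℝ) : Finset (Equiv.Perm (Fin n)) :=
  ((Finset.univ.filter (fun σ : Equiv.Perm (Fin n) => σ.support.card = 4)).filter
     (fun σ => σ.IsCycle)).filter (fun σ => ∏ i ∈ σ.support, S (σ i) i ≠ 0)

lemma B3_mem {S : Matrix (Fin n) (Fin n) ℝ} {σ : Equiv.Perm (Fin n)} :
    σ ∈ B3 S ↔ σ.support.card = 4 ∧ σ.IsCycle ∧ ∏ i ∈ σ.support, S (σ i) i ≠ 0 := by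
  rw [B3]
  simp only [Finset.mem_filter, Finset.mem_univ, true_and]
  tauto

open scoped Classical in
lemma Bsum (S : Matrix (Fin n) (Fin n) ℝ) :
    ∑ σ ∈ ((Finset.univ.filter (fun σ : Equiv.Perm (Fin n) => σ.support.card = 4)).filter
        (fun σ => σ.IsCycle)),
      ((Equiv.Perm.sign σ : ℤ) : ℝ) * ∏ i ∈ σ.support, S (σ i) i
    = - ∑ σ ∈ B3 S, ∏ i ∈ σ.support, S (σ i) i := by
  have h2 : ∑ σ ∈ ((Finset.univ.filter
        (fun σ : Equiv.Perm (Fin n) => σ.support.card = 4)).filter (fun σ => σ.IsCycle)),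
      ((Equiv.Perm.sign σ : ℤ) : ℝ) * ∏ i ∈ σ.support, S (σ i) i
      = ∑ σ ∈ ((Finset.univ.filter
        (fun σ : Equiv.Perm (Fin n) => σ.support.card = 4)).filter (fun σ => σ.IsCycle)),
      (- ∏ i ∈ σ.support, S (σ i) i) := by
    refine Finset.sum_congr rfl ?_
    intro σ hσ
    simp only [Finset.mem_filter, Finset.mem_univ, true_and] at hσ
    have hsign : Equiv.Perm.sign σ = -1 := by
      rw [hσ.2.sign, hσ.1]
      decide
    rw [hsign]
    push_cast
    ring
  have h3 : ∑ σ ∈ B3 S, ∏ i ∈ σ.support, S (σ i) i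
      = ∑ σ ∈ ((Finset.univ.filter
        (fun σ : Equiv.Perm (Fin n) => σ.support.card = 4)).filter (fun σ => σ.IsCycle)),
        ∏ i ∈ σ.support, S (σ i) i := by
    rw [B3]
    exact Finset.sum_filter_ne_zero
      (f := fun σ : Equiv.Perm (Fin n) => ∏ i ∈ σ.support, S (σ i) i) _
  rw [h2, h3]
  rw [Finset.sum_neg_distrib]

lemma Bval {S : Matrix (Fin n) (Fin n) ℝ}
    (hval : ∀ i j : Fin n, S i j = 0 ∨ S i j = 1 ∨ S i j = -1)
    {σ : Equiv.Perm (Fin n)} (hσ : σ ∈ B3 S) :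
    (∏ i ∈ σ.support, S (σ i) i) = 1 ∨ (∏ i ∈ σ.support, S (σ i) i) = -1 := by
  rw [B3_mem] at hσ
  have hnz := hσ.2.2
  have hfac : ∀ i ∈ σ.support, S (σ i) i = 1 ∨ S (σ i) i = -1 := by
    intro i hi
    have := Finset.prod_ne_zero_iff.mp hnz i hi
    rcases hval (σ i) i with h | h | h
    · exact absurd h this
    · exact Or.inl h
    · exact Or.inr h
  refine Finset.prod_induction _ (fun r => r = 1 ∨ r = -1) ?_ (Or.inl rfl) hfac
  rintro x y (rfl | rfl) (rfl | rfl) <;> norm_num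

lemma Beven {S : Matrix (Fin n) (Fin n) ℝ}
    (hsymm : ∀ i j : Fin n, S i j ≠ 0 → S j i ≠ 0) :
    2 ∣ (B3 S).card := by
  have hmemB : ∀ σ, σ ∈ B3 S → σ⁻¹ ∈ B3 S := by
    intro σ hσ
    rw [B3_mem] at hσ ⊢
    have hs : σ⁻¹.support = σ.support := Equiv.Perm.support_inv σ
    refine ⟨by rw [hs]; exact hσ.1, hσ.2.1.inv, ?_⟩
    rw [hs]
    rw [Finset.prod_ne_zero_iff]
    intro i hi
    have hnz := Finset.prod_ne_zero_iff.mp hσ.2.2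
    have hj : σ⁻¹ i ∈ σ.support := by
      rw [← hs] at hi ⊢
      exact Equiv.Perm.apply_mem_support.mpr hi
    have := hnz (σ⁻¹ i) hj
    rw [show σ (σ⁻¹ i) = i from σ.apply_symm_apply i] at this
    exact hsymm _ _ this
  have hinv_ne : ∀ σ ∈ B3 S, σ⁻¹ ≠ σ := by
    intro σ hσ h
    rw [B3_mem] at hσ
    have hord : orderOf σ = 4 := by rw [hσ.2.1.orderOf, hσ.1]
    have hmul : σ * σ = 1 := by
      nth_rewrite 1 [← h]
      exact inv_mul_cancel σ
    have : σ ^ 2 = 1 := by rw [sq, hmul]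
    have := orderOf_le_of_pow_eq_one (by norm_num) this
    omega
  have hprod : ∏ _σ ∈ B3 S, (-1 : ℤ) = 1 := by
    refine Finset.prod_involution (fun σ _ => σ⁻¹) (by norm_num)
      (fun σ hσ _ => hinv_ne σ hσ) (fun σ hσ => hmemB σ hσ) (fun σ hσ => inv_inv σ)
  rw [Finset.prod_const] at hprod
  have := neg_one_pow_eq_one_iff_even (R := ℤ) (by norm_num : (-1 : ℤ) ≠ 1) |>.mp hprod
  exact this.two_dvd
end B

open scoped Classical in
lemma Bcount {n : ℕ} (G : SimpleGraph (Fin n)) (S : Matrix (Fin n) (Fin n) ℝ)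
    (horient : ∀ i j, G.Adj i j → S i j = 1 ∨ S i j = -1)
    (hzero : ∀ i j, ¬ G.Adj i j → S i j = 0) :
    (Finset.univ.filter (fun p : Fin n × Fin n × Fin n × Fin n =>
      p.1 ≠ p.2.1 ∧ p.1 ≠ p.2.2.1 ∧ p.1 ≠ p.2.2.2 ∧ p.2.1 ≠ p.2.2.1 ∧
      p.2.1 ≠ p.2.2.2 ∧ p.2.2.1 ≠ p.2.2.2 ∧
      G.Adj p.1 p.2.1 ∧ G.Adj p.2.1 p.2.2.1 ∧ G.Adj p.2.2.1 p.2.2.2 ∧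
      G.Adj p.2.2.2 p.1)).card = 4 * (B3 S).card := by
  set T := (Finset.univ.filter (fun p : Fin n × Fin n × Fin n × Fin n =>
      p.1 ≠ p.2.1 ∧ p.1 ≠ p.2.2.1 ∧ p.1 ≠ p.2.2.2 ∧ p.2.1 ≠ p.2.2.1 ∧
      p.2.1 ≠ p.2.2.2 ∧ p.2.2.1 ≠ p.2.2.2 ∧
      G.Adj p.1 p.2.1 ∧ G.Adj p.2.1 p.2.2.1 ∧ G.Adj p.2.2.1 p.2.2.2 ∧
      G.Adj p.2.2.2 p.1)) with hT
  have hTmem : ∀ p : Fin n × Fin n × Fin n × Fin n, p ∈ T ↔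
      (p.1 ≠ p.2.1 ∧ p.1 ≠ p.2.2.1 ∧ p.1 ≠ p.2.2.2 ∧ p.2.1 ≠ p.2.2.1 ∧
      p.2.1 ≠ p.2.2.2 ∧ p.2.2.1 ≠ p.2.2.2 ∧
      G.Adj p.1 p.2.1 ∧ G.Adj p.2.1 p.2.2.1 ∧ G.Adj p.2.2.1 p.2.2.2 ∧
      G.Adj p.2.2.2 p.1) := by
    intro p; rw [hT, Finset.mem_filter]; simp
  have hc4T : ∀ p ∈ T, (c4 p.1 p.2.1 p.2.2.1 p.2.2.2).support
      = {p.1, p.2.1, p.2.2.1, p.2.2.2} := by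
    intro p hp
    rw [hTmem] at hp
    obtain ⟨h1, h2, h3, h4, h5, h6, -, -, -, -⟩ := hp
    exact c4_support h1 h2 h3 h4 h5 h6
  have hmapsto : ∀ p ∈ T, c4 p.1 p.2.1 p.2.2.1 p.2.2.2 ∈ B3 S := by
    intro p hp
    have hsupp := hc4T p hp
    rw [hTmem] at hp
    obtain ⟨h1, h2, h3, h4, h5, h6, ha1, ha2, ha3, ha4⟩ := hp
    rw [B3_mem]
    refine ⟨?_, c4_isCycle h1 h2 h3 h4 h5 h6, ?_⟩
    · rw [hsupp, Finset.card_insert_of_notMem (by simp [h1, h2, h3]),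
        Finset.card_insert_of_notMem (by simp [h4, h5]),
        Finset.card_insert_of_notMem (by simp [h6]), Finset.card_singleton]
    · rw [hsupp, prod4 _ h1 h2 h3 h4 h5 h6, c4_apply_a h1 h2 h3,
        c4_apply_b h2 h4 h5, c4_apply_c h3 h5 h6, c4_apply_d h1 h2 h4 h6]
      have n1 : S p.2.1 p.1 ≠ 0 := by
        rcases horient _ _ ha1.symm with h | h <;> rw [h] <;> norm_num
      have n2 : S p.2.2.1 p.2.1 ≠ 0 := by
        rcases horient _ _ ha2.symm with h | h <;> rw [h] <;> norm_num
      have n3 : S p.2.2.2 p.2.2.1 ≠ 0 := by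
        rcases horient _ _ ha3.symm with h | h <;> rw [h] <;> norm_num
      have n4 : S p.1 p.2.2.2 ≠ 0 := by
        rcases horient _ _ ha4.symm with h | h <;> rw [h] <;> norm_num
      exact mul_ne_zero (mul_ne_zero (mul_ne_zero n1 n2) n3) n4
  rw [Finset.card_eq_sum_card_fiberwise hmapsto]
  have hfiber : ∀ σ ∈ B3 S,
      (T.filter (fun p => c4 p.1 p.2.1 p.2.2.1 p.2.2.2 = σ)).card = 4 := by
    intro σ hσ
    rw [B3_mem] at hσ
    obtain ⟨h4c, hcyc, hne⟩ := hσ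
    have hadj : ∀ i ∈ σ.support, G.Adj (σ i) i := by
      intro i hi
      have := Finset.prod_ne_zero_iff.mp hne i hi
      by_contra hc
      exact this (hzero _ _ hc)
    have hcard : (T.filter (fun p => c4 p.1 p.2.1 p.2.2.1 p.2.2.2 = σ)).card
        = σ.support.card := by
      refine Finset.card_bij' (fun p _ => p.1)
        (fun x _ => (x, σ x, σ (σ x), σ (σ (σ x)))) ?_ ?_ ?_ ?_
      · -- forward: p.1 ∈ support
        intro p hp
        rw [Finset.mem_filter] at hp
        obtain ⟨hpT, hpeq⟩ := hp
        have hT1 := (hTmem p).mp hpT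
        have : σ p.1 = p.2.1 := by
          rw [← hpeq]
          exact c4_apply_a hT1.1 hT1.2.1 hT1.2.2.1
        rw [Equiv.Perm.mem_support, this]
        exact hT1.1.symm
      · -- backward: orbit tuple in fiber
        intro x hx
        obtain ⟨h4', hab, hac, had, hbc, hbd, hcd, hsupp⟩ := cycle4_struct hcyc h4c hx
        have hxb : σ x ∈ σ.support := Equiv.Perm.apply_mem_support.mpr hx
        have hxc : σ (σ x) ∈ σ.support := Equiv.Perm.apply_mem_support.mpr hxb
        have hxd : σ (σ (σ x)) ∈ σ.support := Equiv.Perm.apply_mem_support.mpr hxc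
        rw [Finset.mem_filter]
        constructor
        · rw [hTmem]
          refine ⟨hab, hac, had, hbc, hbd, hcd, (hadj x hx).symm, (hadj _ hxb).symm,
            (hadj _ hxc).symm, ?_⟩
          have := hadj _ hxd
          rw [h4'] at this
          exact this.symm
        · -- c4 of orbit equals σ
          refine perm_ext_of (T := {x, σ x, σ (σ x), σ (σ (σ x))})
            (by rw [c4_support hab hac had hbc hbd hcd]) (by rw [hsupp]) ?_
          intro y hy
          simp only [Finset.mem_insert, Finset.mem_singleton] at hy
          rcases hy with rfl | rfl | rfl | rfl
          · rw [c4_apply_a hab hac had]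
          · rw [c4_apply_b hac hbc hbd]
          · rw [c4_apply_c had hbd hcd]
          · rw [c4_apply_d hab hac hbc hcd, h4']
      · -- left inverse
        intro p hp
        rw [Finset.mem_filter] at hp
        obtain ⟨hpT, hpeq⟩ := hp
        have hT1 := (hTmem p).mp hpT
        have e1 : σ p.1 = p.2.1 := by
          rw [← hpeq]; exact c4_apply_a hT1.1 hT1.2.1 hT1.2.2.1
        have e2 : σ p.2.1 = p.2.2.1 := by
          rw [← hpeq]; exact c4_apply_b hT1.2.1 hT1.2.2.2.1 hT1.2.2.2.2.1
        have e3 : σ p.2.2.1 = p.2.2.2 := by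
          rw [← hpeq]
          exact c4_apply_c hT1.2.2.1 hT1.2.2.2.2.1 hT1.2.2.2.2.2.1
        ext <;> simp [e1, e2, e3]
      · intro x hx
        rfl
    rw [hcard, h4c]
  rw [Finset.sum_congr rfl hfiber, Finset.sum_const, smul_eq_mul, mul_comm]

open scoped Classical in
lemma Bone {n : ℕ} (G : SimpleGraph (Fin n)) (S : Matrix (Fin n) (Fin n) ℝ)
    (hS : ∀ i j, S j i = - S i j)
    (horient : ∀ i j, G.Adj i j → S i j = 1 ∨ S i j = -1)
    (hzero : ∀ i j, ¬ G.Adj i j → S i j = 0) :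
    (∀ a b c d : Fin n, a ≠ b → a ≠ c → a ≠ d → b ≠ c → b ≠ d → c ≠ d →
        G.Adj a b → G.Adj b c → G.Adj c d → G.Adj d a →
        S a b * S b c * S c d * S d a = 1)
    ↔ ∀ σ ∈ B3 S, (∏ i ∈ σ.support, S (σ i) i) = 1 := by
  constructor
  · intro h σ hσ
    rw [B3_mem] at hσ
    obtain ⟨h4c, hcyc, hne⟩ := hσ
    have hadj : ∀ i ∈ σ.support, G.Adj (σ i) i := by
      intro i hi
      have := Finset.prod_ne_zero_iff.mp hne i hi
      by_contra hc
      exact this (hzero _ _ hc)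
    have hnon : σ.support.Nonempty := by rw [← Finset.card_pos, h4c]; norm_num
    obtain ⟨a, ha⟩ := hnon
    obtain ⟨h4', hab, hac, had, hbc, hbd, hcd, hsupp⟩ := cycle4_struct hcyc h4c ha
    have hxb : σ a ∈ σ.support := Equiv.Perm.apply_mem_support.mpr ha
    have hxc : σ (σ a) ∈ σ.support := Equiv.Perm.apply_mem_support.mpr hxb
    have hxd : σ (σ (σ a)) ∈ σ.support := Equiv.Perm.apply_mem_support.mpr hxc
    have hu : ∏ i ∈ σ.support, S (σ i) i
        = S (σ a) a * S (σ (σ a)) (σ a) * S (σ (σ (σ a))) (σ (σ a))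
          * S a (σ (σ (σ a))) := by
      rw [hsupp, prod4 _ hab hac had hbc hbd hcd, h4']
    have hAdj4 : G.Adj a (σ (σ (σ a))) := by
      have := hadj _ hxd
      rwa [h4'] at this
    have key := h (σ a) a (σ (σ (σ a))) (σ (σ a))
      hab.symm hbd hbc had hac (fun hh => hcd hh.symm)
      (hadj _ ha) hAdj4 (hadj _ hxc) (hadj _ hxb)
    rw [hu]
    linear_combination key
  · intro h a b c d hab hac had hbc hbd hcd ha1 ha2 ha3 ha4
    have hmem : c4 a b c d ∈ B3 S := by
      rw [B3_mem]
      have hsupp := c4_support hab hac had hbc hbd hcd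
      refine ⟨?_, c4_isCycle hab hac had hbc hbd hcd, ?_⟩
      · rw [hsupp, Finset.card_insert_of_notMem (by simp [hab, hac, had]),
          Finset.card_insert_of_notMem (by simp [hbc, hbd]),
          Finset.card_insert_of_notMem (by simp [hcd]), Finset.card_singleton]
      · rw [hsupp, prod4 _ hab hac had hbc hbd hcd, c4_apply_a hab hac had,
          c4_apply_b hac hbc hbd, c4_apply_c had hbd hcd, c4_apply_d hab hac hbc hcd]
        have n1 : S b a ≠ 0 := by
          rcases horient _ _ ha1.symm with h' | h' <;> rw [h'] <;> norm_num
        have n2 : S c b ≠ 0 := by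
          rcases horient _ _ ha2.symm with h' | h' <;> rw [h'] <;> norm_num
        have n3 : S d c ≠ 0 := by
          rcases horient _ _ ha3.symm with h' | h' <;> rw [h'] <;> norm_num
        have n4 : S a d ≠ 0 := by
          rcases horient _ _ ha4.symm with h' | h' <;> rw [h'] <;> norm_num
        exact mul_ne_zero (mul_ne_zero (mul_ne_zero n1 n2) n3) n4
    have h1 := h _ hmem
    have hu : ∏ i ∈ (c4 a b c d).support, S ((c4 a b c d) i) i
        = S b a * S c b * S d c * S a d := by
      rw [c4_support hab hac had hbc hbd hcd, prod4 _ hab hac had hbc hbd hcd,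
        c4_apply_a hab hac had, c4_apply_b hac hbc hbd, c4_apply_c had hbd hcd,
        c4_apply_d hab hac hbc hcd]
    rw [hu] at h1
    rw [hS b a, hS c b, hS d c, hS a d]
    linear_combination h1

lemma decomp22 {n : ℕ} (σ : Equiv.Perm (Fin n)) (h4 : σ.support.card = 4)
    (hnc : ¬σ.IsCycle) :
    ∃ a b c d : Fin n, a ≠ b ∧ c ≠ d ∧ a ≠ c ∧ a ≠ d ∧ b ≠ c ∧ b ≠ d ∧
      σ = Equiv.swap a b * Equiv.swap c d ∧ σ.support = {a,b,c,d} := by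
  have hne : σ.support.Nonempty := by
    rw [← Finset.card_pos, h4]; norm_num
  obtain ⟨x, hx⟩ := hne
  obtain ⟨c, hcdef⟩ : ∃ c, c = σ.cycleOf x := ⟨_, rfl⟩
  have hcfac : c ∈ σ.cycleFactorsFinset := by
    rw [hcdef]
    exact (Equiv.Perm.cycleOf_mem_cycleFactorsFinset_iff).mpr hx
  have hdisj : Equiv.Perm.Disjoint (σ * c⁻¹) c :=
    Equiv.Perm.disjoint_mul_inv_of_mem_cycleFactorsFinset hcfac
  have hσ : σ = (σ * c⁻¹) * c := (inv_mul_cancel_right σ c).symm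
  have hsupp : σ.support = (σ * c⁻¹).support ∪ c.support := by
    conv_lhs => rw [hσ]
    exact hdisj.support_mul
  have hcards : (σ * c⁻¹).support.card + c.support.card = 4 := by
    have := hdisj.card_support_mul
    rw [inv_mul_cancel_right, h4] at this
    omega
  have hccyc : c.IsCycle := by
    rw [hcdef]; exact Equiv.Perm.isCycle_cycleOf σ (Equiv.Perm.mem_support.mp hx)
  have hc2 : 2 ≤ c.support.card := hccyc.two_le_card_support
  have hcne4 : c.support.card ≠ 4 := by
    intro h
    have : (σ * c⁻¹).support.card = 0 := by omega
    have : σ * c⁻¹ = 1 := by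
      rwa [Finset.card_eq_zero, Equiv.Perm.support_eq_empty_iff] at this
    have : σ = c := by
      have := hσ; rwa [‹σ * c⁻¹ = 1›, one_mul] at this
    exact hnc (this ▸ hccyc)
  have hcne3 : c.support.card ≠ 3 := by
    intro h
    exact (σ * c⁻¹).card_support_ne_one (by omega)
  have hc2' : c.support.card = 2 := by omega
  have hd2 : (σ * c⁻¹).support.card = 2 := by omega
  obtain ⟨a, b, hab, hab'⟩ := Equiv.Perm.card_support_eq_two.mp hd2
  obtain ⟨e, f, hef, hef'⟩ := Equiv.Perm.card_support_eq_two.mp hc2'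
  have hsd : (σ * c⁻¹).support = {a, b} := by rw [hab']; exact Equiv.Perm.support_swap hab
  have hsc : c.support = {e, f} := by rw [hef']; exact Equiv.Perm.support_swap hef
  have hdisjsupp := hdisj.disjoint_support
  rw [hsd, hsc] at hdisjsupp
  have hana : a ∉ ({e, f} : Finset (Fin n)) :=
    Finset.disjoint_left.mp hdisjsupp (Finset.mem_insert_self a {b})
  have hbna : b ∉ ({e, f} : Finset (Fin n)) :=
    Finset.disjoint_left.mp hdisjsupp (by simp)
  have hae : a ≠ e := by intro h; exact hana (by simp [h])
  have haf : a ≠ f := by intro h; exact hana (by simp [h])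
  have hbe : b ≠ e := by intro h; exact hbna (by simp [h])
  have hbf : b ≠ f := by intro h; exact hbna (by simp [h])
  refine ⟨a, b, e, f, hab, hef, hae, haf, hbe, hbf, ?_, ?_⟩
  · rw [hσ, hab', hef']
  · rw [hsupp, hsd, hsc]
    ext y; simp [Finset.mem_insert]; tauto

section PP
variable {α : Type*} [DecidableEq α] [Fintype α]
variable {a b c d : α}

lemma pp_apply_a (hac : a≠c) (had : a≠d) : (Equiv.swap a b * Equiv.swap c d) a = b := by
  simp [Equiv.Perm.mul_apply, Equiv.swap_apply_of_ne_of_ne hac had]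

lemma pp_apply_b (hbc : b≠c) (hbd : b≠d) : (Equiv.swap a b * Equiv.swap c d) b = a := by
  simp [Equiv.Perm.mul_apply, Equiv.swap_apply_of_ne_of_ne hbc hbd]

lemma pp_apply_c (hac : a≠c) (hbc : b≠c) (hcd : c ≠ d) (had : a ≠ d) (hbd : b ≠ d) :
    (Equiv.swap a b * Equiv.swap c d) c = d := by
  rw [Equiv.Perm.mul_apply, Equiv.swap_apply_left,
    Equiv.swap_apply_of_ne_of_ne (Ne.symm had) (Ne.symm hbd)]

lemma pp_apply_d (hac : a≠c) (hbc : b≠c) :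
    (Equiv.swap a b * Equiv.swap c d) d = c := by
  rw [Equiv.Perm.mul_apply, Equiv.swap_apply_right,
    Equiv.swap_apply_of_ne_of_ne (Ne.symm hac) (Ne.symm hbc)]

lemma pp_apply_other {x : α} (hxa : x≠a) (hxb : x≠b) (hxc : x≠c) (hxd : x≠d) :
    (Equiv.swap a b * Equiv.swap c d) x = x := by
  simp [Equiv.Perm.mul_apply, Equiv.swap_apply_of_ne_of_ne hxc hxd,
    Equiv.swap_apply_of_ne_of_ne hxa hxb]

lemma pp_invol (hab : a≠b) (hac : a≠c) (had : a≠d) (hbc : b≠c) (hbd : b≠d) (hcd : c≠d)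
    (x : α) : (Equiv.swap a b * Equiv.swap c d) ((Equiv.swap a b * Equiv.swap c d) x) = x := by
  by_cases hxa : x = a
  · subst hxa; rw [pp_apply_a hac had, pp_apply_b hbc hbd]
  by_cases hxb : x = b
  · subst hxb; rw [pp_apply_b hbc hbd, pp_apply_a hac had]
  by_cases hxc : x = c
  · subst hxc; rw [pp_apply_c hac hbc hcd had hbd, pp_apply_d hac hbc]
  by_cases hxd : x = d
  · subst hxd; rw [pp_apply_d hac hbc, pp_apply_c hac hbc hcd had hbd]
  · rw [pp_apply_other hxa hxb hxc hxd, pp_apply_other hxa hxb hxc hxd]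
end PP

open scoped Classical in
lemma Aside {n : ℕ} (G : SimpleGraph (Fin n)) (S : Matrix (Fin n) (Fin n) ℝ)
    (hS : ∀ i j, S j i = - S i j)
    (horient : ∀ i j, G.Adj i j → S i j = 1 ∨ S i j = -1)
    (hzero : ∀ i j, ¬ G.Adj i j → S i j = 0) :
    ∑ σ ∈ ((Finset.univ.filter (fun σ : Equiv.Perm (Fin n) => σ.support.card = 4)).filter
        (fun σ => ¬σ.IsCycle)),
      ((Equiv.Perm.sign σ : ℤ) : ℝ) * ∏ i ∈ σ.support, S (σ i) i
      = (twoMatchingCount G : ℝ) := by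
  set A2 := ((Finset.univ.filter (fun σ : Equiv.Perm (Fin n) => σ.support.card = 4)).filter
        (fun σ => ¬σ.IsCycle)) with hA2
  have hmem : ∀ σ, σ ∈ A2 ↔ σ.support.card = 4 ∧ ¬σ.IsCycle := by
    intro σ; simp [hA2]
  -- each S entry is 0, 1, or -1
  have hval : ∀ i j : Fin n, S i j = 0 ∨ S i j = 1 ∨ S i j = -1 := by
    intro i j
    by_cases h : G.Adj i j
    · rcases horient i j h with h' | h' <;> simp [h']
    · simp [hzero i j h]
  have key : ∀ σ ∈ A2, ((Equiv.Perm.sign σ : ℤ) : ℝ) * ∏ i ∈ σ.support, S (σ i) i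
      = if (∏ i ∈ σ.support, S (σ i) i) ≠ 0 then 1 else 0 := by
    intro σ hσ
    rw [hmem] at hσ
    obtain ⟨a, b, c, d, hab, hcd, hac, had, hbc, hbd, hσeq, hsupp⟩ :=
      decomp22 σ hσ.1 hσ.2
    have hsign : Equiv.Perm.sign σ = 1 := by
      rw [hσeq, Equiv.Perm.sign_mul, Equiv.Perm.sign_swap hab, Equiv.Perm.sign_swap hcd]
      norm_num
    have hprodeq : ∏ i ∈ σ.support, S (σ i) i = (S a b)^2 * (S c d)^2 := by
      rw [hsupp, prod4 _ hab hac had hbc hbd hcd, hσeq,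
        pp_apply_a hac had, pp_apply_b hbc hbd, pp_apply_c hac hbc hcd had hbd,
        pp_apply_d hac hbc, hS a b, hS c d]
      ring
    rw [hsign, hprodeq]
    rcases hval a b with h1 | h1 | h1 <;> rcases hval c d with h2 | h2 | h2 <;>
      norm_num [h1, h2]
  rw [Finset.sum_congr rfl key, Finset.sum_boole]
  norm_cast
  -- now a cardinality bijection
  rw [twoMatchingCount]
  set MF := ((G.edgeFinset.powersetCard 2).filter
    (fun s => ∀ e ∈ s, ∀ f ∈ s, e ≠ f → ∀ v : Fin n, ¬ (v ∈ e ∧ v ∈ f))) with hMF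
  set A3 := A2.filter (fun σ => ¬∏ i ∈ σ.support, S (σ i) i = 0) with hA3
  have hadjmem : ∀ σ ∈ A3, ∀ i ∈ σ.support, G.Adj (σ i) i := by
    intro σ hσ i hi
    rw [hA3, Finset.mem_filter] at hσ
    have := Finset.prod_ne_zero_iff.mp hσ.2 i hi
    by_contra hadj
    exact this (hzero _ _ hadj)
  refine Finset.card_bij (fun σ _ => σ.support.image (fun i => s(i, σ i))) ?_ ?_ ?_
  · -- maps into MF
    intro σ hσ
    have hσ2 : σ ∈ A2 := Finset.mem_filter.mp hσ |>.1
    rw [hmem] at hσ2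
    obtain ⟨a, b, c, d, hab, hcd, hac, had, hbc, hbd, hσeq, hsupp⟩ :=
      decomp22 σ hσ2.1 hσ2.2
    have hσa : σ a = b := by rw [hσeq]; exact pp_apply_a hac had
    have hσb : σ b = a := by rw [hσeq]; exact pp_apply_b hbc hbd
    have hσc : σ c = d := by rw [hσeq]; exact pp_apply_c hac hbc hcd had hbd
    have hσd : σ d = c := by rw [hσeq]; exact pp_apply_d hac hbc
    have himg : σ.support.image (fun i => s(i, σ i)) = {s(a, b), s(c, d)} := by
      rw [hsupp]
      rw [Finset.image_insert, Finset.image_insert, Finset.image_insert,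
        Finset.image_singleton, hσa, hσb, hσc, hσd]
      rw [Sym2.eq_swap (a := b) (b := a), Sym2.eq_swap (a := d) (b := c)]
      simp [Finset.insert_comm, Finset.insert_idem]
    beta_reduce
    rw [himg, hMF, Finset.mem_filter]
    constructor
    · rw [Finset.mem_powersetCard]
      constructor
      · intro e he
        simp only [Finset.mem_insert, Finset.mem_singleton] at he
        have hadja : G.Adj a b := by
          have := hadjmem σ hσ a (by rw [hsupp]; simp)
          rw [hσa] at this; exact this.symm
        have hadjc : G.Adj c d := by
          have := hadjmem σ hσ c (by rw [hsupp]; simp)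
          rw [hσc] at this; exact this.symm
        rcases he with rfl | rfl
        · exact SimpleGraph.mem_edgeFinset.mpr hadja
        · exact SimpleGraph.mem_edgeFinset.mpr hadjc
      · rw [Finset.card_insert_of_notMem (by
            simp only [Finset.mem_singleton, Sym2.eq_iff]
            push_neg
            exact ⟨fun h => absurd h hac, fun h => absurd h had⟩),
          Finset.card_singleton]
    · intro e he f hf hef v hv
      simp only [Finset.mem_insert, Finset.mem_singleton] at he hf
      rcases he with rfl | rfl <;> rcases hf with rfl | rfl
      · exact hef rfl
      · simp only [Sym2.mem_iff] at hv
        rcases hv.1 with rfl | rfl <;> rcases hv.2 with rfl | rfl <;>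
          first
            | exact hac rfl | exact had rfl | exact hbc rfl | exact hbd rfl
      · simp only [Sym2.mem_iff] at hv
        rcases hv.1 with rfl | rfl <;> rcases hv.2 with rfl | rfl <;>
          first
            | exact hac rfl | exact had rfl | exact hbc rfl | exact hbd rfl
      · exact hef rfl
  · -- injectivity
    intro σ hσ τ hτ hFeq
    beta_reduce at hFeq
    have hinvol : ∀ ρ, ρ ∈ A3 → ∀ z, ρ (ρ z) = z := by
      intro ρ hρ z
      have hρ2 : ρ ∈ A2 := Finset.mem_filter.mp hρ |>.1
      rw [hmem] at hρ2
      obtain ⟨a, b, c, d, hab, hcd, hac, had, hbc, hbd, hρeq, _⟩ :=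
        decomp22 ρ hρ2.1 hρ2.2
      rw [hρeq]
      exact pp_invol hab hac had hbc hbd hcd z
    have hchar : ∀ ρ, ρ ∈ A3 → ∀ x y : Fin n, x ≠ y →
        ((s(x, y) : Sym2 (Fin n)) ∈ ρ.support.image (fun i => s(i, ρ i)) ↔ ρ x = y) := by
      intro ρ hρ x y hxy
      constructor
      · intro hmem'
        obtain ⟨i, hi, heq⟩ := Finset.mem_image.mp hmem'
        rw [Sym2.eq_iff] at heq
        rcases heq with ⟨rfl, h2⟩ | ⟨rfl, h2⟩
        · exact h2
        · rw [← h2, hinvol ρ hρ]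
      · intro h
        refine Finset.mem_image.mpr ⟨x, ?_, by rw [h]⟩
        rw [Equiv.Perm.mem_support, h]
        exact fun hc => hxy hc.symm
    refine Equiv.ext fun x => ?_
    by_cases hσx : σ x = x
    · by_cases hτx : τ x = x
      · rw [hσx, hτx]
      · have : (s(x, τ x) : Sym2 (Fin n)) ∈ τ.support.image (fun i => s(i, τ i)) :=
          (hchar τ hτ x (τ x) (fun h => hτx h.symm)).mpr rfl
        rw [← hFeq] at this
        exact (hchar σ hσ x (τ x) (fun h => hτx h.symm)).mp this
    · have : (s(x, σ x) : Sym2 (Fin n)) ∈ σ.support.image (fun i => s(i, σ i)) :=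
        (hchar σ hσ x (σ x) (fun h => hσx h.symm)).mpr rfl
      rw [hFeq] at this
      exact ((hchar τ hτ x (σ x) (fun h => hσx h.symm)).mp this).symm
  · -- surjectivity
    intro s hs
    rw [hMF, Finset.mem_filter, Finset.mem_powersetCard] at hs
    obtain ⟨⟨hsub, hcard2⟩, hdisj⟩ := hs
    obtain ⟨e, f, hef, rfl⟩ := Finset.card_eq_two.mp hcard2
    obtain ⟨a, b, rfl⟩ : ∃ a b, e = s(a, b) := by
      induction e using Sym2.ind with | _ x y => exact ⟨x, y, rfl⟩
    obtain ⟨c, d, rfl⟩ : ∃ c d, f = s(c, d) := by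
      induction f using Sym2.ind with | _ x y => exact ⟨x, y, rfl⟩
    have hadjab : G.Adj a b := by
      have := hsub (Finset.mem_insert_self _ _)
      exact SimpleGraph.mem_edgeFinset.mp this
    have hadjcd : G.Adj c d := by
      have := hsub (show s(c, d) ∈ ({s(a, b), s(c, d)} : Finset (Sym2 (Fin n))) from by simp)
      exact SimpleGraph.mem_edgeFinset.mp this
    have hab : a ≠ b := G.ne_of_adj hadjab
    have hcd : c ≠ d := G.ne_of_adj hadjcd
    have hdisj' := hdisj s(a, b) (Finset.mem_insert_self _ _)
      s(c, d) (show s(c, d) ∈ ({s(a, b), s(c, d)} : Finset (Sym2 (Fin n))) from by simp) hef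
    have hac : a ≠ c := fun h => hdisj' a ⟨by simp, by simp [h]⟩
    have had : a ≠ d := fun h => hdisj' a ⟨by simp, by simp [h]⟩
    have hbc : b ≠ c := fun h => hdisj' b ⟨by simp, by simp [h]⟩
    have hbd : b ≠ d := fun h => hdisj' b ⟨by simp, by simp [h]⟩
    refine ⟨Equiv.swap a b * Equiv.swap c d, ?_, ?_⟩
    · -- membership in A3
      have hτa : (Equiv.swap a b * Equiv.swap c d) a = b := pp_apply_a hac had
      have hτb : (Equiv.swap a b * Equiv.swap c d) b = a := pp_apply_b hbc hbd
      have hτc : (Equiv.swap a b * Equiv.swap c d) c = d := pp_apply_c hac hbc hcd had hbd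
      have hτd : (Equiv.swap a b * Equiv.swap c d) d = c := pp_apply_d hac hbc
      have hsupp : (Equiv.swap a b * Equiv.swap c d).support = {a, b, c, d} := by
        ext x
        simp only [Equiv.Perm.mem_support, Finset.mem_insert, Finset.mem_singleton]
        constructor
        · intro h
          by_contra hx
          push_neg at hx
          exact h (pp_apply_other hx.1 hx.2.1 hx.2.2.1 hx.2.2.2)
        · rintro (rfl | rfl | rfl | rfl)
          · rw [hτa]; exact hab.symm
          · rw [hτb]; exact hab
          · rw [hτc]; exact hcd.symm
          · rw [hτd]; exact hcd
      have hcard4 : (Equiv.swap a b * Equiv.swap c d).support.card = 4 := by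
        rw [hsupp, Finset.card_insert_of_notMem (by simp [hab, hac, had]),
          Finset.card_insert_of_notMem (by simp [hbc, hbd]),
          Finset.card_insert_of_notMem (by simp [hcd]), Finset.card_singleton]
      have hnc : ¬(Equiv.swap a b * Equiv.swap c d).IsCycle := by
        intro hc
        have h1 : Equiv.Perm.sign (Equiv.swap a b * Equiv.swap c d) = 1 := by
          rw [Equiv.Perm.sign_mul, Equiv.Perm.sign_swap hab, Equiv.Perm.sign_swap hcd]
          norm_num
        have h2 := hc.sign
        rw [h1, hcard4] at h2
        have : -(-1 : ℤˣ) ^ 4 = -1 := by decide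
        rw [this] at h2
        exact absurd h2 (by decide)
      have hune : ∏ i ∈ (Equiv.swap a b * Equiv.swap c d).support,
          S ((Equiv.swap a b * Equiv.swap c d) i) i ≠ 0 := by
        rw [hsupp, prod4 _ hab hac had hbc hbd hcd, hτa, hτb, hτc, hτd]
        have n1 : S b a ≠ 0 := by
          rcases horient b a hadjab.symm with h | h <;> rw [h] <;> norm_num
        have n2 : S a b ≠ 0 := by
          rcases horient a b hadjab with h | h <;> rw [h] <;> norm_num
        have n3 : S d c ≠ 0 := by
          rcases horient d c hadjcd.symm with h | h <;> rw [h] <;> norm_num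
        have n4 : S c d ≠ 0 := by
          rcases horient c d hadjcd with h | h <;> rw [h] <;> norm_num
        exact mul_ne_zero (mul_ne_zero (mul_ne_zero n1 n2) n3) n4
      rw [hA3, Finset.mem_filter, hmem]
      exact ⟨⟨hcard4, hnc⟩, hune⟩
    · -- image equals s
      beta_reduce
      have hτa : (Equiv.swap a b * Equiv.swap c d) a = b := pp_apply_a hac had
      have hτb : (Equiv.swap a b * Equiv.swap c d) b = a := pp_apply_b hbc hbd
      have hτc : (Equiv.swap a b * Equiv.swap c d) c = d := pp_apply_c hac hbc hcd had hbd
      have hτd : (Equiv.swap a b * Equiv.swap c d) d = c := pp_apply_d hac hbc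
      have hsupp : (Equiv.swap a b * Equiv.swap c d).support = {a, b, c, d} := by
        ext x
        simp only [Equiv.Perm.mem_support, Finset.mem_insert, Finset.mem_singleton]
        constructor
        · intro h
          by_contra hx
          push_neg at hx
          exact h (pp_apply_other hx.1 hx.2.1 hx.2.2.1 hx.2.2.2)
        · rintro (rfl | rfl | rfl | rfl)
          · rw [hτa]; exact hab.symm
          · rw [hτb]; exact hab
          · rw [hτc]; exact hcd.symm
          · rw [hτd]; exact hcd
      rw [hsupp, Finset.image_insert, Finset.image_insert, Finset.image_insert,
        Finset.image_singleton, hτa, hτb, hτc, hτd,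
        Sym2.eq_swap (a := b) (b := a), Sym2.eq_swap (a := d) (b := c)]
      simp [Finset.insert_comm, Finset.insert_idem]

/-- For an oriented graph `G^σ` on `n` vertices with skew characteristic polynomial
`∑ (-1)^i a_i λ^{n-i}`, one has `a_4 ≥ M(G,2) - 2q(G)`, with equality iff every
quadrangle of `G` is evenly oriented (i.e. the product of the skew-adjacency entries
around the quadrangle equals `1`). -/
theorem skew_charpoly_a4_lower_bound
    {n : ℕ} (hn : 4 ≤ n) (G : SimpleGraph (Fin n)) [DecidableRel G.Adj]
    (S : Matrix (Fin n) (Fin n) ℝ)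
    (hskew : Sᵀ = -S)
    (horient : ∀ i j, G.Adj i j → S i j = 1 ∨ S i j = -1)
    (hzero : ∀ i j, ¬ G.Adj i j → S i j = 0) :
    (twoMatchingCount G : ℝ) - 2 * (quadCount G : ℝ) ≤
      (-1 : ℝ) ^ 4 * S.charpoly.coeff (n - 4) ∧
    ((-1 : ℝ) ^ 4 * S.charpoly.coeff (n - 4) =
        (twoMatchingCount G : ℝ) - 2 * (quadCount G : ℝ) ↔
      ∀ a b c d : Fin n, a ≠ b → a ≠ c → a ≠ d → b ≠ c → b ≠ d → c ≠ d →
        G.Adj a b → G.Adj b c → G.Adj c d → G.Adj d a →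
        S a b * S b c * S c d * S d a = 1) := by
  classical
  have hS : ∀ i j : Fin n, S j i = - S i j := by
    intro i j
    have := congr_fun (congr_fun hskew i) j
    simpa [Matrix.transpose_apply] using this
  have hdiag : ∀ i : Fin n, S i i = 0 := by
    intro i
    have := hS i i
    linarith
  have hval : ∀ i j : Fin n, S i j = 0 ∨ S i j = 1 ∨ S i j = -1 := by
    intro i j
    by_cases h : G.Adj i j
    · rcases horient i j h with h' | h' <;> simp [h']
    · simp [hzero i j h]
  have hsymm : ∀ i j : Fin n, S i j ≠ 0 → S j i ≠ 0 := by
    intro i j h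
    rw [hS i j]
    simpa using h
  -- the coefficient as a sum over permutations with support of size 4
  have hcoeff := coeff_lemma hn S hdiag
  have hsplit := Finset.sum_filter_add_sum_filter_not
    (Finset.univ.filter (fun σ : Equiv.Perm (Fin n) => σ.support.card = 4))
    (fun σ => σ.IsCycle)
    (fun σ => ((Equiv.Perm.sign σ : ℤ) : ℝ) * ∏ i ∈ σ.support, S (σ i) i)
  have hA := Aside G S hS horient hzero
  have hB := Bsum S
  have hcoeff2 : S.charpoly.coeff (n - 4)
      = (twoMatchingCount G : ℝ) - ∑ σ ∈ B3 S, ∏ i ∈ σ.support, S (σ i) i := by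
    rw [hcoeff, ← hsplit, hA, hB]
    ring
  -- counting
  obtain ⟨k2, hk2⟩ := Beven hsymm
  have hqc : quadCount G = k2 := by
    rw [quadCount]
    have hfilter := Bcount G S horient hzero
    rw [Finset.filter_congr_decidable] at hfilter
    rw [Finset.filter_congr_decidable, hfilter, hk2]
    omega
  -- bounding the cycle sum
  have hle : ∀ σ ∈ B3 S, (∏ i ∈ σ.support, S (σ i) i) ≤ 1 := by
    intro σ hσ
    rcases Bval hval hσ with h | h <;> rw [h] <;> norm_num
  have hsumle : ∑ σ ∈ B3 S, (∏ i ∈ σ.support, S (σ i) i) ≤ ((B3 S).card : ℝ) := by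
    calc ∑ σ ∈ B3 S, (∏ i ∈ σ.support, S (σ i) i) ≤ (B3 S).card • (1 : ℝ) :=
          Finset.sum_le_card_nsmul _ _ 1 hle
      _ = ((B3 S).card : ℝ) := by simp
  have hKq : ((B3 S).card : ℝ) = 2 * (quadCount G : ℝ) := by
    rw [hqc, hk2]
    push_cast
    ring
  constructor
  · rw [show ((-1:ℝ))^4 = 1 from by norm_num, one_mul, hcoeff2]
    linarith [hsumle, hKq]
  · rw [show ((-1:ℝ))^4 = 1 from by norm_num, one_mul, hcoeff2]
    have hiff : (twoMatchingCount G : ℝ) - (∑ σ ∈ B3 S, ∏ i ∈ σ.support, S (σ i) i)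
        = (twoMatchingCount G : ℝ) - 2 * (quadCount G : ℝ)
        ↔ ∑ σ ∈ B3 S, (∏ i ∈ σ.support, S (σ i) i) = ((B3 S).card : ℝ) := by
      rw [hKq]
      constructor <;> intro h <;> linarith
    rw [hiff]
    have hsumiff : (∑ σ ∈ B3 S, (∏ i ∈ σ.support, S (σ i) i) = ((B3 S).card : ℝ))
        ↔ ∀ σ ∈ B3 S, (∏ i ∈ σ.support, S (σ i) i) = 1 := by
      constructor
      · intro h σ hσ
        have hzero' : ∑ σ ∈ B3 S, ((1 : ℝ) - ∏ i ∈ σ.support, S (σ i) i) = 0 := by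
          rw [Finset.sum_sub_distrib, Finset.sum_const, h]
          simp
        have := (Finset.sum_eq_zero_iff_of_nonneg
          (fun τ hτ => by linarith [hle τ hτ])).mp hzero' σ hσ
        linarith
      · intro h
        rw [Finset.sum_congr rfl h, Finset.sum_const]
        simp
    rw [hsumiff]
    exact (Bone G S hS horient hzero).symm
end

section
/- Let G^σ be an oriented graph with an arc e = (u,v) that is not contained in any even cycle of the underlying graph. Then the skew characteristic polynomials satisfy φ(G^σ, λ) = φ(G^σ - e, λ) + φ(G^σ - u - v, λ). -/
open Matrix Polynomial Equiv Equiv.Perm Finset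

namespace SkewCharAux

set_option linter.unusedSectionVars false

variable {V : Type*} [DecidableEq V] [Fintype V]

lemma exists_walk_fn {G : SimpleGraph V} (f : ℕ → V) :
    ∀ (L : ℕ), (∀ i, i < L → G.Adj (f i) (f (i+1))) →
    ∃ w : G.Walk (f 0) (f L),
      w.support = (List.range (L+1)).map f ∧
      w.edges = (List.range L).map (fun i => s(f i, f (i+1))) := by
  intro L
  induction L with
  | zero => intro _; exact ⟨SimpleGraph.Walk.nil, by simp [List.range_succ], by simp⟩
  | succ L ih =>
    intro h
    obtain ⟨w, hs, he⟩ := ih (fun i hi => h i (Nat.lt_succ_of_lt hi))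
    refine ⟨w.concat (h L (Nat.lt_succ_self L)), ?_, ?_⟩
    · rw [SimpleGraph.Walk.support_concat, hs, List.range_succ (n := L+1), List.range_succ (n := L)]
      simp
    · rw [SimpleGraph.Walk.edges_concat, he, List.range_succ]
      simp

lemma exists_cycle_fn {G : SimpleGraph V} (f : ℕ → V) (N : ℕ) (hN3 : 3 ≤ N)
    (hinj : ∀ i j, i < N → j < N → f i = f j → i = j)
    (hfN : f N = f 0)
    (hadj : ∀ i, i < N → G.Adj (f i) (f (i+1))) :
    ∃ c : G.Walk (f 0) (f 0), c.IsCycle ∧ c.length = N ∧ s(f 0, f 1) ∈ c.edges := by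
  classical
  set g : ℕ → V := fun i => f (i+1) with hg
  have hN1 : N - 1 + 1 = N := by omega
  have hgadj : ∀ i, i < N - 1 → G.Adj (g i) (g (i+1)) := by
    intro i hi
    have h1 : i + 1 < N := by omega
    simpa [hg] using hadj (i+1) h1
  obtain ⟨w, hs, he⟩ := exists_walk_fn (G := G) g (N-1) hgadj
  have hgN : g (N-1) = f 0 := by simp only [hg, hN1, hfN]
  set w' : G.Walk (g 0) (f 0) := w.copy rfl hgN with hw'
  have hs' : w'.support = (List.range N).map g := by
    rw [hw', SimpleGraph.Walk.support_copy, hs, hN1]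
  have he' : w'.edges = (List.range (N-1)).map (fun i => s(g i, g (i+1))) := by
    rw [hw', SimpleGraph.Walk.edges_copy, he]
  -- injectivity on the closed range
  have hinj' : ∀ i j, i ≤ N → j ≤ N → f i = f j → i = j ∨ (i = 0 ∧ j = N) ∨ (i = N ∧ j = 0) := by
    intro i j hi hj hij
    rcases Nat.lt_or_ge i N with hi' | hi'
    · rcases Nat.lt_or_ge j N with hj' | hj'
      · exact Or.inl (hinj i j hi' hj' hij)
      · have hjN : j = N := by omega
        rw [hjN, hfN] at hij
        have h0 := hinj i 0 hi' (by omega) hij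
        omega
    · have hiN : i = N := by omega
      rw [hiN, hfN] at hij
      rcases Nat.lt_or_ge j N with hj' | hj'
      · have h0 := hinj 0 j (by omega) hj' hij
        omega
      · omega
  have hpath : w'.IsPath := by
    rw [SimpleGraph.Walk.isPath_def, hs']
    refine List.Nodup.map_on ?_ List.nodup_range
    intro i hi j hj hij
    simp only [List.mem_range] at hi hj
    have := hinj' (i+1) (j+1) (by omega) (by omega) hij
    omega
  have hedge : s(f 0, f 1) ∉ w'.edges := by
    rw [he']
    intro hmem
    obtain ⟨i, hi, hie⟩ := List.mem_map.mp hmem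
    simp only [List.mem_range] at hi
    rw [Sym2.eq_iff] at hie
    simp only [hg] at hie
    rcases hie with ⟨h1, h2⟩ | ⟨h1, h2⟩
    · -- f (i+1) = f 0
      have e1 := hinj' (i+1) 0 (by omega) (by omega) h1
      omega
    · -- f (i+1) = f 1, f (i+2) = f 0
      have e2 := hinj' (i+1+1) 0 (by omega) (by omega) h2
      have e1 := hinj' (i+1) 1 (by omega) (by omega) h1
      omega
  have hlen : w'.length = N - 1 := by
    have := congrArg List.length he'
    rwa [SimpleGraph.Walk.length_edges, List.length_map, List.length_range] at this
  have hadj01 : G.Adj (f 0) (g 0) := hadj 0 (by omega)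
  refine ⟨SimpleGraph.Walk.cons hadj01 w', ?_, ?_, ?_⟩
  · exact SimpleGraph.Path.cons_isCycle ⟨w', hpath⟩ hadj01 hedge
  · simp [SimpleGraph.Walk.length_cons, hlen]; omega
  · rw [SimpleGraph.Walk.edges_cons]
    exact List.mem_cons_self



theorem Perm.apply_inv_self (f : Perm V) (x : V) : f (f⁻¹ x) = x := f.apply_symm_apply x

theorem Perm.inv_apply_self (f : Perm V) (x : V) : f⁻¹ (f x) = x := f.symm_apply_apply x

lemma cycleOf_inv_apply_eq (σ : Perm V) (u x : V) (hx : σ.SameCycle u x) :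
    (σ.cycleOf u)⁻¹ x = σ⁻¹ x := by
  have h1 : σ.SameCycle u (σ⁻¹ x) := (sameCycle_symm_apply_right).2 hx
  have h2 : (σ.cycleOf u) (σ⁻¹ x) = x := by
    rw [h1.cycleOf_apply, Perm.apply_inv_self]
  calc (σ.cycleOf u)⁻¹ x = (σ.cycleOf u)⁻¹ ((σ.cycleOf u) (σ⁻¹ x)) := by rw [h2]
  _ = σ⁻¹ x := Perm.inv_apply_self _ _

lemma sigma'_apply_sameCycle (σ : Perm V) (u x : V) (hx : σ.SameCycle u x) :
    ((σ.cycleOf u)⁻¹ * (σ.cycleOf u)⁻¹ * σ) x = σ⁻¹ x := by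
  have h1 : σ.SameCycle u (σ x) := sameCycle_apply_right.2 hx
  have h2 : (σ.cycleOf u)⁻¹ (σ x) = x := by
    rw [cycleOf_inv_apply_eq σ u _ h1, Perm.inv_apply_self]
  simp only [Perm.mul_apply, h2]
  exact cycleOf_inv_apply_eq σ u x hx

lemma sigma'_apply_not_sameCycle (σ : Perm V) (u x : V) (hx : ¬ σ.SameCycle u x) :
    ((σ.cycleOf u)⁻¹ * (σ.cycleOf u)⁻¹ * σ) x = σ x := by
  have h1 : ¬ σ.SameCycle u (σ x) := fun h => hx (sameCycle_apply_right.1 h)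
  have h2 : (σ.cycleOf u) (σ x) = σ x := by rw [cycleOf_apply, if_neg h1]
  have h3 : (σ.cycleOf u)⁻¹ (σ x) = σ x := by
    conv_lhs => rw [← h2]
    exact Perm.inv_apply_self _ _
  simp only [Perm.mul_apply, h3]

lemma sigma'_pow (σ : Perm V) (u : V) :
    ∀ k : ℕ, σ.SameCycle u (((σ.cycleOf u)⁻¹ ^ k) u) ∧
      ((((σ.cycleOf u)⁻¹ * (σ.cycleOf u)⁻¹ * σ) ^ k) u = ((σ.cycleOf u)⁻¹ ^ k) u) := by
  intro k
  induction k with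
  | zero => simpa using SameCycle.refl σ u
  | succ k ih =>
    obtain ⟨h1, h2⟩ := ih
    have hstep : (σ.cycleOf u)⁻¹ (((σ.cycleOf u)⁻¹ ^ k) u)
        = σ⁻¹ (((σ.cycleOf u)⁻¹ ^ k) u) := cycleOf_inv_apply_eq σ u _ h1
    constructor
    · rw [pow_succ', Perm.mul_apply, hstep]
      exact (sameCycle_symm_apply_right).2 h1
    · rw [pow_succ', pow_succ']
      have e1 : (((σ.cycleOf u)⁻¹ * (σ.cycleOf u)⁻¹ * σ) * (((σ.cycleOf u)⁻¹ * (σ.cycleOf u)⁻¹ * σ) ^ k)) u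
          = ((σ.cycleOf u)⁻¹ * (σ.cycleOf u)⁻¹ * σ) ((((σ.cycleOf u)⁻¹ * (σ.cycleOf u)⁻¹ * σ) ^ k) u) := rfl
      have e2 : ((σ.cycleOf u)⁻¹ * ((σ.cycleOf u)⁻¹ ^ k)) u = (σ.cycleOf u)⁻¹ (((σ.cycleOf u)⁻¹ ^ k) u) := rfl
      rw [e1, e2, h2, sigma'_apply_sameCycle σ u _ h1, hstep]

lemma cinv_ne_of_ne (c : Perm V) (y : V) (hy : c y ≠ y) : c⁻¹ y ≠ y := by
  intro h
  have h2 := congrArg c h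
  rw [Perm.apply_inv_self] at h2
  exact hy h2.symm

lemma cycleOf_flip (σ : Perm V) (u : V) (hu : σ u ≠ u) :
    ((σ.cycleOf u)⁻¹ * (σ.cycleOf u)⁻¹ * σ).cycleOf u = (σ.cycleOf u)⁻¹ := by
  have hcyc : (σ.cycleOf u).IsCycle := isCycle_cycleOf σ hu
  have hcu : σ.cycleOf u u = σ u := cycleOf_apply_self σ u
  have hcune : σ.cycleOf u u ≠ u := by rw [hcu]; exact hu
  have hmain : ∀ x, σ.SameCycle u x ↔
      (((σ.cycleOf u)⁻¹ * (σ.cycleOf u)⁻¹ * σ)).SameCycle u x := by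
    intro x
    constructor
    · intro hx
      have husupp : u ∈ σ.support := mem_support.2 hu
      have hxsupp : σ x ≠ x := mem_support.1 ((SameCycle.mem_support_iff hx).1 husupp)
      have hcx : σ.cycleOf u x ≠ x := by rw [hx.cycleOf_apply]; exact hxsupp
      have hsc : (σ.cycleOf u)⁻¹.SameCycle u x :=
        (hcyc.inv).sameCycle (cinv_ne_of_ne _ u hcune) (cinv_ne_of_ne _ x hcx)
      obtain ⟨k, _, hk⟩ := hsc.exists_pow_eq'
      refine ⟨(k : ℤ), ?_⟩
      rw [zpow_natCast, (sigma'_pow σ u k).2, hk]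
    · intro hx
      obtain ⟨k, _, hk⟩ := hx.exists_pow_eq'
      rw [(sigma'_pow σ u k).2] at hk
      exact hk ▸ (sigma'_pow σ u k).1
  ext x
  by_cases hx : σ.SameCycle u x
  · rw [((hmain x).1 hx).cycleOf_apply]
    rw [sigma'_apply_sameCycle σ u x hx, cycleOf_inv_apply_eq σ u x hx]
  · have h1 : ¬ (((σ.cycleOf u)⁻¹ * (σ.cycleOf u)⁻¹ * σ)).SameCycle u x :=
      fun h => hx ((hmain x).2 h)
    rw [cycleOf_apply, if_neg h1]
    have h2 : σ.cycleOf u x = x := by rw [cycleOf_apply, if_neg hx]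
    have h3 : (σ.cycleOf u)⁻¹ x = x := by
      have h4 := congrArg (fun y => (σ.cycleOf u)⁻¹ y) h2
      simp only [Perm.inv_apply_self] at h4
      exact h4.symm
    rw [h3]

variable {R : Type*} [CommRing R]

lemma det_updateRow_single_eq_sum (A : Matrix V V R) (r w : V) :
    (A.updateRow w (Pi.single r 1)).det
      = ∑ σ ∈ univ.filter (fun σ : Perm V => σ r = w),
          Perm.sign σ • ∏ i ∈ univ.erase r, A (σ i) i := by
  classical
  rw [Matrix.det_apply]
  rw [← Finset.sum_filter_add_sum_filter_not univ (fun σ : Perm V => σ r = w)]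
  have hzero : ∑ σ ∈ univ.filter (fun σ : Perm V => ¬ σ r = w), Perm.sign σ •
      ∏ i, (A.updateRow w (Pi.single r 1)) (σ i) i = 0 := by
    apply Finset.sum_eq_zero
    intro σ hσ
    simp only [mem_filter, mem_univ, true_and] at hσ
    have h1 : (A.updateRow w (Pi.single r 1)) (σ (σ⁻¹ w)) (σ⁻¹ w) = 0 := by
      rw [Perm.apply_inv_self, Matrix.updateRow_self]
      apply Pi.single_eq_of_ne
      intro h
      apply hσ
      rw [← h, Perm.apply_inv_self]
    have h2 := Finset.prod_eq_zero (f := fun i => (A.updateRow w (Pi.single r 1)) (σ i) i)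
      (Finset.mem_univ (σ⁻¹ w)) h1
    rw [h2, smul_zero]
  rw [hzero, add_zero]
  apply Finset.sum_congr rfl
  intro σ hσ
  simp only [mem_filter, mem_univ, true_and] at hσ
  congr 1
  rw [← Finset.mul_prod_erase univ _ (Finset.mem_univ r)]
  have h2 : (A.updateRow w (Pi.single r 1)) (σ r) r = 1 := by
    rw [hσ, Matrix.updateRow_self, Pi.single_eq_same]
  rw [h2, one_mul]
  apply Finset.prod_congr rfl
  intro i hi
  have hir : i ≠ r := Finset.ne_of_mem_erase hi
  have h3 : σ i ≠ w := by
    intro h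
    exact hir (σ.injective (h.trans hσ.symm))
  rw [Matrix.updateRow_ne h3]

lemma adjugate_entries_eq (A : Matrix V V R) (u v : V) (huv : u ≠ v)
    (hskewA : ∀ i j : V, i ≠ j → A j i = - A i j)
    (hparity : ∀ σ : Perm V, σ u = v →
      (∀ j ∈ ((σ.cycleOf u).support.erase u), A (σ j) j ≠ 0) →
      Odd (σ.cycleOf u).support.card) :
    (A.updateRow v (Pi.single u 1)).det = (A.updateRow u (Pi.single v 1)).det := by
  classical
  rw [det_updateRow_single_eq_sum A u v, det_updateRow_single_eq_sum A v u]
  refine Finset.sum_bij' (fun σ _ => (σ.cycleOf u)⁻¹ * (σ.cycleOf u)⁻¹ * σ)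
    (fun τ _ => (τ.cycleOf u)⁻¹ * (τ.cycleOf u)⁻¹ * τ) ?_ ?_ ?_ ?_ ?_
  · -- maps into filter (τ v = u)
    intro σ hσ
    simp only [mem_filter, mem_univ, true_and] at hσ ⊢
    have hsc : σ.SameCycle u v := ⟨1, by simpa using hσ⟩
    rw [sigma'_apply_sameCycle σ u v hsc, ← hσ, Perm.inv_apply_self]
  · -- reverse map into filter (σ u = v)
    intro τ hτ
    simp only [mem_filter, mem_univ, true_and] at hτ ⊢
    have hsc : τ.SameCycle u u := Equiv.Perm.SameCycle.refl τ u
    rw [sigma'_apply_sameCycle τ u u hsc]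
    rw [Perm.inv_eq_iff_eq, hτ]
  · -- left inverse
    intro σ hσ
    simp only [mem_filter, mem_univ, true_and] at hσ
    have hu : σ u ≠ u := by rw [hσ]; exact Ne.symm huv
    rw [cycleOf_flip σ u hu]
    group
  · -- right inverse
    intro τ hτ
    simp only [mem_filter, mem_univ, true_and] at hτ
    have hu : τ u ≠ u := by
      intro h
      exact huv ((τ.injective (hτ.trans h.symm)).symm)
    rw [cycleOf_flip τ u hu]
    group
  · -- main term equality
    intro σ hσmem
    simp only [mem_filter, mem_univ, true_and] at hσmem
    have hσ : σ u = v := hσmem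
    have hu : σ u ≠ u := by rw [hσ]; exact Ne.symm huv
    set Z : Finset V := (σ.cycleOf u).support with hZ
    set σ' : Perm V := (σ.cycleOf u)⁻¹ * (σ.cycleOf u)⁻¹ * σ with hσ'def
    have husupp : u ∈ σ.support := mem_support.2 hu
    have hZmem : ∀ x, x ∈ Z ↔ σ.SameCycle u x := fun x => mem_support_cycleOf_iff' hu
    have huZ : u ∈ Z := (hZmem u).2 (Equiv.Perm.SameCycle.refl σ u)
    have hvZ : v ∈ Z := (hZmem v).2 ⟨1, by simpa using hσ⟩
    have hmoves : ∀ x ∈ Z, σ x ≠ x := fun x hx =>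
      mem_support.1 ((Equiv.Perm.SameCycle.mem_support_iff ((hZmem x).1 hx)).1 husupp)
    have hZcl : ∀ x, x ∈ Z → σ x ∈ Z := fun x hx =>
      (hZmem _).2 (sameCycle_apply_right.2 ((hZmem x).1 hx))
    have hZclinv : ∀ x, x ∈ Z → σ⁻¹ x ∈ Z := fun x hx =>
      (hZmem _).2 (sameCycle_symm_apply_right.2 ((hZmem x).1 hx))
    have hZout : ∀ x, x ∉ Z → σ x ∉ Z := by
      intro x hx h
      exact hx ((hZmem x).2 (sameCycle_apply_right.1 ((hZmem _).1 h)))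
    have hσ'in : ∀ x ∈ Z, σ' x = σ⁻¹ x := fun x hx =>
      sigma'_apply_sameCycle σ u x ((hZmem x).1 hx)
    have hσ'out : ∀ x, x ∉ Z → σ' x = σ x := fun x hx =>
      sigma'_apply_not_sameCycle σ u x (fun h => hx ((hZmem x).2 h))
    have hsgn : Perm.sign σ' = Perm.sign σ := by
      have h1 : Perm.sign σ' =
          (Perm.sign (σ.cycleOf u)⁻¹ * Perm.sign (σ.cycleOf u)⁻¹) * Perm.sign σ := by
        rw [hσ'def, _root_.map_mul, _root_.map_mul]
      rw [h1, Int.units_mul_self, one_mul]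
    have hsplit : ∀ w' : V, w' ∈ Z → Finset.univ.erase w' = (Z.erase w') ∪ (Finset.univ \ Z) := by
      intro w' hw'
      ext x
      simp only [Finset.mem_erase, Finset.mem_univ, Finset.mem_union, Finset.mem_sdiff,
        true_and, and_true]
      by_cases hx : x ∈ Z
      · constructor
        · intro h; exact Or.inl ⟨h, hx⟩
        · rintro (⟨h, _⟩ | h)
          · exact h
          · exact absurd hx h
      · constructor
        · intro _; exact Or.inr hx
        · rintro (⟨_, hxz⟩ | h)
          · exact absurd hxz hx
          · intro he; rw [he] at hx; exact hx hw'
    have hdisj : ∀ w' : V, Disjoint (Z.erase w') (Finset.univ \ Z) := by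
      intro w'
      rw [Finset.disjoint_left]
      intro x hx hx2
      exact (Finset.mem_sdiff.1 hx2).2 (Finset.mem_of_mem_erase hx)
    have houter : ∏ i ∈ Finset.univ \ Z, A (σ' i) i = ∏ i ∈ Finset.univ \ Z, A (σ i) i := by
      apply Finset.prod_congr rfl
      intro x hx
      rw [hσ'out x (Finset.mem_sdiff.1 hx).2]
    have hinner : ∏ i ∈ Z.erase v, A (σ' i) i = ∏ j ∈ Z.erase u, A j (σ j) := by
      refine Finset.prod_bij' (fun i _ => σ⁻¹ i) (fun j _ => σ j) ?_ ?_ ?_ ?_ ?_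
      · intro a ha
        rcases Finset.mem_erase.1 ha with ⟨hne, haZ⟩
        refine Finset.mem_erase.2 ⟨?_, hZclinv a haZ⟩
        intro h
        apply hne
        have := congrArg σ h
        rwa [Perm.apply_inv_self, hσ] at this
      · intro b hb
        rcases Finset.mem_erase.1 hb with ⟨hne, hbZ⟩
        refine Finset.mem_erase.2 ⟨?_, hZcl b hbZ⟩
        intro h
        exact hne (σ.injective (h.trans hσ.symm))
      · intro a _
        exact Perm.apply_inv_self σ a
      · intro b _
        exact Perm.inv_apply_self σ b
      · intro a ha
        rcases Finset.mem_erase.1 ha with ⟨_, haZ⟩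
        rw [hσ'in a haZ, Perm.apply_inv_self]
    have hfact : ∏ j ∈ Z.erase u, A j (σ j)
        = (-1 : R) ^ (Z.erase u).card * ∏ j ∈ Z.erase u, A (σ j) j := by
      have h1 : ∀ j ∈ Z.erase u, A j (σ j) = (-1) * A (σ j) j := by
        intro j hj
        rw [hskewA (σ j) j (hmoves j (Finset.mem_of_mem_erase hj))]
        ring
      rw [Finset.prod_congr rfl h1, Finset.prod_mul_distrib, Finset.prod_const]
    rw [hsplit u huZ, hsplit v hvZ, Finset.prod_union (hdisj u), Finset.prod_union (hdisj v),
        houter, hinner, hfact, hsgn]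
    by_cases hall : ∀ j ∈ Z.erase u, A (σ j) j ≠ 0
    · have hodd : Odd Z.card := hparity σ hσ hall
      have hcd : (Z.erase u).card = Z.card - 1 := Finset.card_erase_of_mem huZ
      have heven : Even (Z.erase u).card := by
        rcases hodd with ⟨m, hm⟩
        refine ⟨m, ?_⟩
        omega
      rw [heven.neg_one_pow, one_mul]
    · push_neg at hall
      obtain ⟨j0, hj0, hj0z⟩ := hall
      rw [Finset.prod_eq_zero (f := fun j => A (σ j) j) hj0 hj0z]
      simp

lemma updateRow_comm' (A : Matrix V V R) {i j : V} (hij : i ≠ j) (r s : V → R) :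
    (A.updateRow i r).updateRow j s = (A.updateRow j s).updateRow i r := by
  ext a b
  by_cases ha : a = j
  · subst ha
    rw [Matrix.updateRow_self, Matrix.updateRow_ne hij.symm, Matrix.updateRow_self]
  · rw [Matrix.updateRow_ne ha]
    by_cases ha2 : a = i
    · subst ha2
      rw [Matrix.updateRow_self, Matrix.updateRow_self]
    · rw [Matrix.updateRow_ne ha2, Matrix.updateRow_ne ha2, Matrix.updateRow_ne ha]

lemma det_two_single_rows (A : Matrix V V R) (u v : V) (huv : u ≠ v) (c d : R) :
    ((A.updateRow u (Pi.single v c)).updateRow v (Pi.single u d)).det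
      = (- (c * d)) * (A.submatrix (fun i : {x : V // x ≠ u ∧ x ≠ v} => (i : V))
          (fun j : {x : V // x ≠ u ∧ x ≠ v} => (j : V))).det := by
  classical
  set B := (A.updateRow u (Pi.single v c)).updateRow v (Pi.single u d) with hB
  set p : V → Prop := fun x => x = u ∨ x = v with hp
  have hBu : ∀ j, B u j = (Pi.single v c : V → R) j := by
    intro j
    rw [hB, Matrix.updateRow_ne huv, Matrix.updateRow_self]
  have hBv : ∀ j, B v j = (Pi.single u d : V → R) j := by
    intro j
    rw [hB, Matrix.updateRow_self]
  have hBother : ∀ i, i ≠ u → i ≠ v → ∀ j, B i j = A i j := by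
    intro i hiu hiv j
    rw [hB, Matrix.updateRow_ne hiv, Matrix.updateRow_ne hiu]
  rw [← Matrix.det_submatrix_equiv_self (Equiv.sumCompl p) B]
  rw [← Matrix.fromBlocks_toBlocks (B.submatrix (Equiv.sumCompl p) (Equiv.sumCompl p))]
  have h12 : (B.submatrix (Equiv.sumCompl p) (Equiv.sumCompl p)).toBlocks₁₂ = 0 := by
    ext i j
    rcases i with ⟨x, hx⟩
    have hj1 : (j : V) ≠ u := fun h => j.2 (Or.inl h)
    have hj2 : (j : V) ≠ v := fun h => j.2 (Or.inr h)
    simp only [Matrix.toBlocks₁₂, Matrix.submatrix_apply, Equiv.sumCompl_apply_inl,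
      Equiv.sumCompl_apply_inr, Matrix.of_apply, Matrix.zero_apply]
    rcases hx with rfl | rfl
    · rw [hBu]
      exact Pi.single_eq_of_ne hj2 _
    · rw [hBv]
      exact Pi.single_eq_of_ne hj1 _
  rw [h12, Matrix.det_fromBlocks_zero₁₂]
  congr 1
  · -- 2x2 block determinant
    have hu' : p u := Or.inl rfl
    have hv' : p v := Or.inr rfl
    set e2 : Fin 2 ≃ {x : V // p x} :=
      { toFun := ![⟨u, hu'⟩, ⟨v, hv'⟩]
        invFun := fun x => if (x : V) = u then 0 else 1
        left_inv := by
          intro i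
          fin_cases i
          · simp
          · simp [huv.symm]
        right_inv := by
          rintro ⟨x, hx | hx⟩ <;> subst hx
          · simp
          · simp [huv.symm] } with he2
    rw [← Matrix.det_submatrix_equiv_self e2]
    rw [Matrix.det_fin_two]
    have e00 : e2 0 = ⟨u, hu'⟩ := rfl
    have e11 : e2 1 = ⟨v, hv'⟩ := rfl
    simp only [Matrix.submatrix_apply, e00, e11, Matrix.toBlocks₁₁, Matrix.of_apply,
      Equiv.sumCompl_apply_inl]
    rw [hBu, hBu, hBv, hBv]
    rw [Pi.single_eq_of_ne huv.symm, Pi.single_eq_same, Pi.single_eq_same,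
      Pi.single_eq_of_ne huv]
    ring
  · -- complement block
    have he3 : ∀ x : V, (x ≠ u ∧ x ≠ v) ↔ ¬ p x := by
      intro x
      rw [hp]
      exact not_or.symm
    set e3 : {x : V // x ≠ u ∧ x ≠ v} ≃ {x : V // ¬ p x} := Equiv.subtypeEquivRight he3 with he3'
    rw [← Matrix.det_submatrix_equiv_self e3]
    congr 1
    ext i j
    have hiu : (i : V) ≠ u := i.2.1
    have hiv : (i : V) ≠ v := i.2.2
    simp only [Matrix.submatrix_apply, Matrix.toBlocks₂₂, Matrix.of_apply,
      Equiv.sumCompl_apply_inr]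
    exact hBother _ hiu hiv _

end SkewCharAux

open SkewCharAux

/-- Let `G^σ` be an oriented graph with skew-adjacency matrix `S`, and let `e = (u,v)`
be an arc that lies on no even cycle of the underlying graph `G`.  Then
`φ(G^σ, λ) = φ(G^σ - e, λ) + φ(G^σ - u - v, λ)`, where `G^σ - e` has the skew-adjacency
matrix obtained by zeroing the `(u,v)` and `(v,u)` entries of `S`, and `G^σ - u - v`
has the principal submatrix of `S` on the vertices other than `u` and `v`. -/
theorem skew_charpoly_arc_deletion
    {n : ℕ} (G : SimpleGraph (Fin n)) [DecidableRel G.Adj]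
    (S : Matrix (Fin n) (Fin n) ℝ)
    (hskew : Sᵀ = -S)
    (horient : ∀ i j, G.Adj i j → S i j = 1 ∨ S i j = -1)
    (hzero : ∀ i j, ¬ G.Adj i j → S i j = 0)
    (u v : Fin n) (huv : G.Adj u v) (harc : S u v = 1)
    (hnocycle : ∀ (w : Fin n) (c : G.Walk w w), c.IsCycle → Even c.length →
      s(u, v) ∉ c.edges) :
    S.charpoly =
      (Matrix.of (fun i j : Fin n =>
          if (i = u ∧ j = v) ∨ (i = v ∧ j = u) then 0 else S i j)).charpoly +
      (S.submatrix (fun i : {x : Fin n // x ≠ u ∧ x ≠ v} => (i : Fin n))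
          (fun j : {x : Fin n // x ≠ u ∧ x ≠ v} => (j : Fin n))).charpoly := by
  classical
  have hne : u ≠ v := G.ne_of_adj huv
  have hvu : S v u = -1 := by
    have h := congrFun (congrFun hskew u) v
    simp only [Matrix.transpose_apply, Matrix.neg_apply, harc] at h
    exact h
  set S' : Matrix (Fin n) (Fin n) ℝ := Matrix.of (fun i j : Fin n =>
      if (i = u ∧ j = v) ∨ (i = v ∧ j = u) then 0 else S i j) with hS'
  have hS'app : ∀ i j, S' i j = if (i = u ∧ j = v) ∨ (i = v ∧ j = u) then 0 else S i j :=
    fun i j => rfl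
  set A : Matrix (Fin n) (Fin n) ℝ[X] := charmatrix S' with hA
  have hS'uv : S' u v = 0 := by rw [hS'app]; simp
  have hS'vu : S' v u = 0 := by rw [hS'app]; simp
  have hS'skew : ∀ i j : Fin n, S' j i = - S' i j := by
    intro i j
    rw [hS'app, hS'app]
    by_cases h1 : (j = u ∧ i = v) ∨ (j = v ∧ i = u)
    · rw [if_pos h1, if_pos (by tauto), neg_zero]
    · rw [if_neg h1, if_neg (by tauto)]
      have h := congrFun (congrFun hskew i) j
      simpa using h
  have hAskew : ∀ i j : Fin n, i ≠ j → A j i = - A i j := by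
    intro i j hij
    rw [hA, charmatrix_apply_ne _ _ _ (Ne.symm hij), charmatrix_apply_ne _ _ _ hij,
      hS'skew i j]
    simp
  -- the parity condition from the no-even-cycle hypothesis
  have hparity : ∀ σ : Equiv.Perm (Fin n), σ u = v →
      (∀ j ∈ ((σ.cycleOf u).support.erase u), A (σ j) j ≠ 0) →
      Odd (σ.cycleOf u).support.card := by
    intro σ hσu hall
    by_contra hnotodd
    have heven : Even (σ.cycleOf u).support.card := Nat.not_odd_iff_even.1 hnotodd
    have hu : σ u ≠ u := by rw [hσu]; exact Ne.symm hne
    have hcyc : (σ.cycleOf u).IsCycle := Equiv.Perm.isCycle_cycleOf σ hu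
    have hZmem : ∀ x, x ∈ (σ.cycleOf u).support ↔ σ.SameCycle u x :=
      fun x => Equiv.Perm.mem_support_cycleOf_iff' hu
    have huZ : u ∈ (σ.cycleOf u).support := (hZmem u).2 (Equiv.Perm.SameCycle.refl σ u)
    have hvZ : v ∈ (σ.cycleOf u).support := (hZmem v).2 ⟨1, by simpa using hσu⟩
    set N := (σ.cycleOf u).support.card with hNdef
    have hNord : orderOf (σ.cycleOf u) = N := hcyc.orderOf
    have hcune : (σ.cycleOf u) u ≠ u := by
      rw [Equiv.Perm.cycleOf_apply_self]; exact hu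
    have hky : ∀ k, 0 < k → k < N → ((σ.cycleOf u) ^ k) u ≠ u := by
      intro k hk0 hkN h
      have h2 : (σ.cycleOf u) ^ k = 1 := (hcyc.pow_eq_one_iff' hcune).2 h
      have h3 : orderOf (σ.cycleOf u) ∣ k := orderOf_dvd_of_pow_eq_one h2
      rw [hNord] at h3
      exact absurd (Nat.le_of_dvd hk0 h3) (not_le.2 hkN)
    have hinj : ∀ i j, i < N → j < N →
        ((σ.cycleOf u) ^ i) u = ((σ.cycleOf u) ^ j) u → i = j := by
      have key : ∀ a b, a ≤ b → b < N →
          ((σ.cycleOf u) ^ a) u = ((σ.cycleOf u) ^ b) u → a = b := by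
        intro a b hab hbN h
        have h1 : ((σ.cycleOf u) ^ a) (((σ.cycleOf u) ^ (b - a)) u)
            = ((σ.cycleOf u) ^ a) u := by
          rw [← Equiv.Perm.mul_apply, ← pow_add]
          rw [show a + (b - a) = b from by omega]
          exact h.symm
        have h2 : ((σ.cycleOf u) ^ (b-a)) u = u := ((σ.cycleOf u) ^ a).injective h1
        by_contra hne'
        exact hky (b-a) (by omega) (by omega) h2
      intro i j hi hj hij
      rcases le_total i j with h | h
      · exact key i j h hj hij
      · exact (key j i h hi hij.symm).symm
    have hfN : ((σ.cycleOf u) ^ N) u = ((σ.cycleOf u) ^ 0) u := by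
      rw [← hNord, pow_orderOf_eq_one, pow_zero]
    have hadj : ∀ k, k < N → G.Adj (((σ.cycleOf u)^k) u) (((σ.cycleOf u)^(k+1)) u) := by
      intro k hk
      have hsck : σ.SameCycle u (((σ.cycleOf u)^k) u) := by
        rw [Equiv.Perm.cycleOf_pow_apply_self]
        exact ⟨(k : ℤ), by simp⟩
      have hstep : ((σ.cycleOf u)^(k+1)) u = σ (((σ.cycleOf u)^k) u) := by
        rw [pow_succ', Equiv.Perm.mul_apply]
        exact hsck.cycleOf_apply
      rw [hstep]
      by_cases hk0 : k = 0
      · subst hk0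
        have h0 : ((σ.cycleOf u)^0) u = u := by simp
        rw [h0, hσu]
        exact huv
      · have hne_u : ((σ.cycleOf u)^k) u ≠ u := hky k (by omega) hk
        have hmemZ : ((σ.cycleOf u)^k) u ∈ (σ.cycleOf u).support := (hZmem _).2 hsck
        have hErased : ((σ.cycleOf u)^k) u ∈ (σ.cycleOf u).support.erase u :=
          Finset.mem_erase.2 ⟨hne_u, hmemZ⟩
        have hAne := hall _ hErased
        have hmoves : σ (((σ.cycleOf u)^k) u) ≠ ((σ.cycleOf u)^k) u :=
          Equiv.Perm.mem_support.1
            ((Equiv.Perm.SameCycle.mem_support_iff hsck).1 (Equiv.Perm.mem_support.2 hu))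
        have hS'ne : S' (σ (((σ.cycleOf u)^k) u)) (((σ.cycleOf u)^k) u) ≠ 0 := by
          intro h0
          apply hAne
          rw [hA, charmatrix_apply_ne _ _ _ hmoves, h0]
          simp
        have hSne : S (σ (((σ.cycleOf u)^k) u)) (((σ.cycleOf u)^k) u) ≠ 0 := by
          intro h0
          apply hS'ne
          rw [hS'app]
          split_ifs with hcnd
          · rfl
          · exact h0
        have hadj2 : G.Adj (σ (((σ.cycleOf u)^k) u)) (((σ.cycleOf u)^k) u) := by
          by_contra hna
          exact hSne (hzero _ _ hna)
        exact hadj2.symm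
    have hN2 : 2 ≤ N := by
      have h12 : 1 < (σ.cycleOf u).support.card :=
        Finset.one_lt_card.2 ⟨u, huZ, v, hvZ, hne⟩
      omega
    have hNne2 : N ≠ 2 := by
      intro h2
      have h1v : ((σ.cycleOf u)^1) u = v := by
        rw [pow_one, Equiv.Perm.cycleOf_apply_self, hσu]
      have hσv : σ v = u := by
        have hsck : σ.SameCycle u (((σ.cycleOf u)^1) u) := by
          rw [Equiv.Perm.cycleOf_pow_apply_self]
          exact ⟨(1:ℤ), by simp⟩
        have hstep1 : ((σ.cycleOf u)^2) u = σ (((σ.cycleOf u)^1) u) := by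
          rw [pow_succ', Equiv.Perm.mul_apply]
          exact hsck.cycleOf_apply
        have h2u : ((σ.cycleOf u)^2) u = u := by
          rw [← h2, ← hNord, pow_orderOf_eq_one]
          rfl
        rw [h1v, h2u] at hstep1
        exact hstep1.symm
      apply hall v (Finset.mem_erase.2 ⟨Ne.symm hne, hvZ⟩)
      rw [hσv, hA, charmatrix_apply_ne _ _ _ hne, hS'uv]
      simp
    have hN3 : 3 ≤ N := by
      rcases heven with ⟨m, hm⟩
      omega
    obtain ⟨cw, hc1, hc2, hc3⟩ := SkewCharAux.exists_cycle_fn (G := G)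
      (fun k => ((σ.cycleOf u)^k) u) N hN3 hinj hfN hadj
    have h0 : ((σ.cycleOf u)^0) u = u := by simp
    have h1v : ((σ.cycleOf u)^1) u = v := by
      rw [pow_one, Equiv.Perm.cycleOf_apply_self, hσu]
    have hmem : s(u, v) ∈ cw.edges := by
      have hs : s(u, v) = s(((σ.cycleOf u)^0) u, ((σ.cycleOf u)^1) u) := by rw [h0, h1v]
      rw [hs]
      exact hc3
    have hEvenLen : Even cw.length := by
      rw [hc2]
      exact heven
    exact hnocycle _ cw hc1 hEvenLen hmem
  have hkey : (A.updateRow v (Pi.single u 1)).det = (A.updateRow u (Pi.single v 1)).det :=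
    adjugate_entries_eq A u v hne hAskew hparity
  -- decomposition of the characteristic matrix
  have hcm_eq : ∀ i j : Fin n, S i j = S' i j → charmatrix S i j = A i j := by
    intro i j h
    rw [hA]
    by_cases hij : i = j
    · subst hij
      rw [charmatrix_apply_eq, charmatrix_apply_eq, h]
    · rw [charmatrix_apply_ne _ _ _ hij, charmatrix_apply_ne _ _ _ hij, h]
  have hSS' : ∀ i j : Fin n, ¬((i = u ∧ j = v) ∨ (i = v ∧ j = u)) → S i j = S' i j := by
    intro i j h
    rw [hS'app, if_neg h]
  have hdecomp : charmatrix S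
      = (A.updateRow u (A u + Pi.single v (-1))).updateRow v (A v + Pi.single u 1) := by
    apply Matrix.ext
    intro i j
    by_cases hiv : i = v
    · rw [hiv, Matrix.updateRow_self, Pi.add_apply]
      by_cases hju : j = u
      · rw [hju, Pi.single_eq_same]
        have h1 : charmatrix S v u = 1 := by
          rw [charmatrix_apply_ne _ _ _ (Ne.symm hne), hvu]
          simp
        have h2 : A v u = 0 := by
          rw [hA, charmatrix_apply_ne _ _ _ (Ne.symm hne), hS'vu]
          simp
        rw [h1, h2, zero_add]
      · rw [Pi.single_eq_of_ne hju, add_zero]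
        refine hcm_eq v j (hSS' v j ?_)
        rintro (⟨h1, _⟩ | ⟨_, h2⟩)
        · exact (Ne.symm hne) h1
        · exact hju h2
    · rw [Matrix.updateRow_ne hiv]
      by_cases hiu : i = u
      · rw [hiu, Matrix.updateRow_self, Pi.add_apply]
        by_cases hjv : j = v
        · rw [hjv, Pi.single_eq_same]
          have h1 : charmatrix S u v = -1 := by
            rw [charmatrix_apply_ne _ _ _ hne, harc]
            simp
          have h2 : A u v = 0 := by
            rw [hA, charmatrix_apply_ne _ _ _ hne, hS'uv]
            simp
          rw [h1, h2, zero_add]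
        · rw [Pi.single_eq_of_ne hjv, add_zero]
          refine hcm_eq u j (hSS' u j ?_)
          rintro (⟨_, h1⟩ | ⟨h2, _⟩)
          · exact hjv h1
          · exact hne h2
      · rw [Matrix.updateRow_ne hiu]
        refine hcm_eq i j (hSS' i j ?_)
        rintro (⟨h1, _⟩ | ⟨h2, _⟩)
        · exact hiu h1
        · exact hiv h2
  -- expand the determinant
  have hster : (Pi.single v (-1 : ℝ[X]) : Fin n → ℝ[X])
      = (-1 : ℝ[X]) • (Pi.single v (1:ℝ[X]) : Fin n → ℝ[X]) := by
    ext x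
    by_cases h : x = v
    · subst h; simp
    · simp [Pi.single_eq_of_ne h]
  have e1 : (charmatrix S).det
      = ((A.updateRow u (A u + Pi.single v (-1))).updateRow v (A v)).det
        + ((A.updateRow u (A u + Pi.single v (-1))).updateRow v (Pi.single u 1)).det := by
    rw [hdecomp, Matrix.det_updateRow_add]
  have e2 : ((A.updateRow u (A u + Pi.single v (-1))).updateRow v (A v)).det
      = A.det + (A.updateRow u (Pi.single v (-1))).det := by
    have hrowv : (A.updateRow u (A u + Pi.single v (-1))) v = A v :=
      Matrix.updateRow_ne (Ne.symm hne)
    conv_lhs => rw [← hrowv]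
    rw [Matrix.updateRow_eq_self, Matrix.det_updateRow_add, Matrix.updateRow_eq_self]
  have e3 : ((A.updateRow u (A u + Pi.single v (-1))).updateRow v (Pi.single u 1)).det
      = (A.updateRow v (Pi.single u 1)).det
        + ((A.updateRow v (Pi.single u 1)).updateRow u (Pi.single v (-1))).det := by
    have hrowu : (A.updateRow v (Pi.single u 1)) u = A u := Matrix.updateRow_ne hne
    rw [updateRow_comm' A hne _ _, Matrix.det_updateRow_add]
    congr 1
    conv_lhs => rw [← hrowu]
    rw [Matrix.updateRow_eq_self]
  have e4 : (A.updateRow u (Pi.single v (-1))).det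
      = - (A.updateRow u (Pi.single v 1)).det := by
    rw [hster, Matrix.det_updateRow_smul]
    ring
  have e5 : ((A.updateRow v (Pi.single u 1)).updateRow u (Pi.single v (-1))).det
      = (A.submatrix (fun i : {x : Fin n // x ≠ u ∧ x ≠ v} => (i : Fin n))
          (fun j : {x : Fin n // x ≠ u ∧ x ≠ v} => (j : Fin n))).det := by
    rw [← updateRow_comm' A hne _ _]
    rw [det_two_single_rows A u v hne (-1) 1]
    ring
  have e6 : A.submatrix (fun i : {x : Fin n // x ≠ u ∧ x ≠ v} => (i : Fin n))
        (fun j : {x : Fin n // x ≠ u ∧ x ≠ v} => (j : Fin n))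
      = charmatrix (S.submatrix (fun i : {x : Fin n // x ≠ u ∧ x ≠ v} => (i : Fin n))
          (fun j : {x : Fin n // x ≠ u ∧ x ≠ v} => (j : Fin n))) := by
    ext i j
    have hcnd : ¬(((i : Fin n) = u ∧ (j : Fin n) = v) ∨ ((i : Fin n) = v ∧ (j : Fin n) = u)) := by
      rintro (⟨h1, _⟩ | ⟨h2, _⟩)
      · exact i.2.1 h1
      · exact i.2.2 h2
    by_cases hij : i = j
    · subst hij
      rw [Matrix.submatrix_apply, hA, charmatrix_apply_eq, charmatrix_apply_eq,
        Matrix.submatrix_apply, hS'app, if_neg hcnd]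
    · have hij' : (i : Fin n) ≠ (j : Fin n) := fun h => hij (Subtype.ext h)
      rw [Matrix.submatrix_apply, hA, charmatrix_apply_ne _ _ _ hij',
        charmatrix_apply_ne _ _ _ hij, Matrix.submatrix_apply, hS'app, if_neg hcnd]
  unfold Matrix.charpoly
  rw [e1, e2, e3, e4, e5, e6, hkey]
  ring
end

section
/- Let O^+_{n,m} be the oriented graph obtained from a star on n vertices with center v₁ (all arcs directed away from v₁) by adding m-n+1 arcs all with head v₂, a fixed leaf. Its skew characteristic polynomial is λⁿ + m·λ^{n-2} + (m-n+1)(2n-m-3)·λ^{n-4}. -/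
open Matrix Polynomial

/-- The skew-adjacency matrix of the oriented graph `O⁺_{n,m}`: the star with center
`v₁ = 0` and all arcs directed away from `v₁`, together with `m - n + 1` further arcs
with tails `2, …, m-n+2` and common head `v₂ = 1`. -/
def skewO (n m : ℕ) : Matrix (Fin n) (Fin n) ℝ :=
  Matrix.of fun i j =>
    if (i : ℕ) = 0 ∧ (j : ℕ) ≠ 0 then 1
    else if (j : ℕ) = 0 ∧ (i : ℕ) ≠ 0 then -1
    else if (j : ℕ) = 1 ∧ 2 ≤ (i : ℕ) ∧ (i : ℕ) ≤ m - n + 2 then 1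
    else if (i : ℕ) = 1 ∧ 2 ≤ (j : ℕ) ∧ (j : ℕ) ≤ m - n + 2 then -1
    else 0

lemma charpoly_mul_comm_pow {n r : ℕ} (hr : r ≤ n)
    (A : Matrix (Fin n) (Fin r) ℝ) (B : Matrix (Fin r) (Fin n) ℝ) :
    (A * B).charpoly = X ^ (n - r) * (B * A).charpoly := by
  set F := FractionRing (Polynomial ℝ)
  set φ : Polynomial ℝ →+* F := algebraMap (Polynomial ℝ) F with hφ
  have hinj : Function.Injective φ := IsFractionRing.injective (Polynomial ℝ) F
  apply hinj
  set ψ : ℝ →+* F := φ.comp Polynomial.C with hψ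
  set x : F := φ X with hxdef
  have hx : x ≠ 0 := by
    rw [hxdef, Ne, map_eq_zero_iff φ hinj]
    exact X_ne_zero
  have key : ∀ (p : ℕ) (M : Matrix (Fin p) (Fin p) ℝ),
      φ M.charpoly = det (x • (1 : Matrix (Fin p) (Fin p) F) - M.map ψ) := by
    intro p M
    rw [Matrix.charpoly, RingHom.map_det]
    congr 1
    ext i j
    by_cases h : i = j <;>
      simp [h, charmatrix_apply, Matrix.diagonal, Matrix.one_apply, Matrix.map_apply, hψ, hxdef]
  have hmapAB : (A * B).map ψ = A.map ψ * B.map ψ := Matrix.map_mul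
  have hmapBA : (B * A).map ψ = B.map ψ * A.map ψ := Matrix.map_mul
  set a := A.map ψ
  set b := B.map ψ
  have split : ∀ (p q : ℕ) (U : Matrix (Fin p) (Fin q) F) (V : Matrix (Fin q) (Fin p) F),
      det (x • (1 : Matrix (Fin p) (Fin p) F) - U * V)
        = x ^ p * det (1 - x⁻¹ • (V * U)) := by
    intro p q U V
    have h1 : x • (1 : Matrix (Fin p) (Fin p) F) - U * V
        = x • ((1 : Matrix (Fin p) (Fin p) F) - (x⁻¹ • U) * V) := by
      rw [smul_sub, Matrix.smul_mul, smul_smul, mul_inv_cancel₀ hx, one_smul]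
    rw [h1, det_smul, Fintype.card_fin, det_one_sub_mul_comm, Matrix.mul_smul]
  have e1 : φ (A * B).charpoly = x ^ n * det (1 - x⁻¹ • (b * a)) := by
    rw [key, hmapAB, split]
  have e2 : φ (B * A).charpoly = x ^ r * det (1 - x⁻¹ • (b * a)) := by
    rw [key, hmapBA]
    have h1 : x • (1 : Matrix (Fin r) (Fin r) F) - b * a
        = x • ((1 : Matrix (Fin r) (Fin r) F) - x⁻¹ • (b * a)) := by
      rw [smul_sub, smul_smul, mul_inv_cancel₀ hx, one_smul]
    rw [h1, det_smul, Fintype.card_fin]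
  rw [_root_.map_mul, map_pow, e1, e2, ← hxdef, ← mul_assoc, ← pow_add]
  congr 2
  omega


def cA (n m : ℕ) : Matrix (Fin n) (Fin 4) ℝ :=
  Matrix.of fun i t =>
    if (t : ℕ) = 0 then (if (i : ℕ) = 0 then 1 else 0)
    else if (t : ℕ) = 1 then (if (i : ℕ) ≠ 0 then -1 else 0)
    else if (t : ℕ) = 2 then (if 2 ≤ (i : ℕ) ∧ (i : ℕ) ≤ m - n + 2 then 1 else 0)
    else (if (i : ℕ) = 1 then -1 else 0)

def cB (n m : ℕ) : Matrix (Fin n) (Fin 4) ℝ :=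
  Matrix.of fun j t =>
    if (t : ℕ) = 0 then (if (j : ℕ) ≠ 0 then 1 else 0)
    else if (t : ℕ) = 1 then (if (j : ℕ) = 0 then 1 else 0)
    else if (t : ℕ) = 2 then (if (j : ℕ) = 1 then 1 else 0)
    else (if 2 ≤ (j : ℕ) ∧ (j : ℕ) ≤ m - n + 2 then 1 else 0)

lemma count_sum' (n : ℕ) (c : ℝ) (P : ℕ → Prop) [DecidablePred P] (a b : ℕ)
    (hb : b ≤ n) (hP : ∀ j, j < n → (P j ↔ a ≤ j ∧ j < b)) :
    ∑ j : Fin n, (if P (j : ℕ) then c else 0) = ((b - a : ℕ) : ℝ) * c := by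
  rw [Fin.sum_univ_eq_sum_range (fun k => if P k then c else 0) n,
    ← Finset.sum_filter]
  have h : (Finset.range n).filter P = Finset.Ico a b := by
    ext j
    simp only [Finset.mem_filter, Finset.mem_range, Finset.mem_Ico]
    constructor
    · rintro ⟨hj, hp⟩; exact (hP j hj).mp hp
    · intro h
      have hj : j < n := lt_of_lt_of_le h.2 hb
      exact ⟨hj, (hP j hj).mpr h⟩
  rw [h, Finset.sum_const, Nat.card_Ico, nsmul_eq_mul]

set_option maxHeartbeats 1000000 in
lemma skewO_factor (n m : ℕ) : skewO n m = cA n m * (cB n m)ᵀ := by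
  ext i j
  simp only [skewO, cA, cB, Matrix.mul_apply, Matrix.transpose_apply, Matrix.of_apply,
    Fin.sum_univ_four, Fin.isValue]
  norm_num
  split_ifs <;> norm_num <;> omega

lemma BA_eq (n m : ℕ) (hnm : n ≤ m) (hm2 : m + 5 ≤ 2 * n) :
    (cB n m)ᵀ * cA n m =
      !![0, -((n - 1 : ℕ) : ℝ), ((m - n + 1 : ℕ) : ℝ), -1;
         1, 0, 0, 0;
         0, -1, 0, -1;
         0, -((m - n + 1 : ℕ) : ℝ), ((m - n + 1 : ℕ) : ℝ), 0] := by
  have hn5 : 5 ≤ n := by omega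
  ext t s
  fin_cases t <;> fin_cases s <;>
    simp only [Matrix.mul_apply, Matrix.transpose_apply, cA, cB, Matrix.of_apply,
      Fin.isValue, Fin.mk_zero, Fin.mk_one, Fin.val_zero, Fin.val_one, Fin.val_mk,
      Matrix.cons_val', Matrix.cons_val_zero, Matrix.cons_val_one, Matrix.head_cons,
      Matrix.empty_val', Matrix.cons_val_fin_one, Matrix.head_fin_const] <;>
    norm_num
  -- (0,0)
  · exact Finset.sum_eq_zero fun j _ => by
      have hj := j.isLt; split_ifs <;> (try (exfalso; omega)) <;> norm_num
  -- (0,1)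
  · trans (∑ x : Fin n, (if 1 ≤ (x : ℕ) ∧ (x : ℕ) < n then (-1 : ℝ) else 0))
    · exact Finset.sum_congr rfl fun j _ => by
        have hj := j.isLt; split_ifs <;> (try (exfalso; omega)) <;> norm_num
    · refine (count_sum' n (-1) _ 1 n le_rfl fun j hj => Iff.rfl).trans ?_
      push_cast [Nat.cast_sub (by omega : 1 ≤ n)]
      ring
  -- (0,2)
  · trans (∑ x : Fin n, (if 2 ≤ (x : ℕ) ∧ (x : ℕ) < m - n + 3 then (1 : ℝ) else 0))
    · exact Finset.sum_congr rfl fun j _ => by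
        have hj := j.isLt; split_ifs <;> (try (exfalso; omega)) <;> norm_num
    · refine (count_sum' n 1 _ 2 (m - n + 3) (by omega) fun j hj => Iff.rfl).trans ?_
      have h : m - n + 3 - 2 = m - n + 1 := by omega
      rw [h]; push_cast; ring
  -- (0,3)
  · trans (∑ x : Fin n, (if 1 ≤ (x : ℕ) ∧ (x : ℕ) < 2 then (-1 : ℝ) else 0))
    · exact Finset.sum_congr rfl fun j _ => by
        have hj := j.isLt; split_ifs <;> (try (exfalso; omega)) <;> norm_num
    · refine (count_sum' n (-1) _ 1 2 (by omega) fun j hj => Iff.rfl).trans ?_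
      norm_num
  -- (1,0)
  · trans (∑ x : Fin n, (if 0 ≤ (x : ℕ) ∧ (x : ℕ) < 1 then (1 : ℝ) else 0))
    · exact Finset.sum_congr rfl fun j _ => by
        have hj := j.isLt; split_ifs <;> (try (exfalso; omega)) <;> norm_num
    · refine (count_sum' n 1 _ 0 1 (by omega) fun j hj => Iff.rfl).trans ?_
      norm_num
  -- (1,1)
  · exact Finset.sum_eq_zero fun j _ => by
      have hj := j.isLt; split_ifs <;> (try (exfalso; omega)) <;> norm_num
  -- (1,2)
  · exact Finset.sum_eq_zero fun j _ => by
      have hj := j.isLt; split_ifs <;> (try (exfalso; omega)) <;> norm_num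
  -- (1,3)
  · exact Finset.sum_eq_zero fun j _ => by
      have hj := j.isLt; split_ifs <;> (try (exfalso; omega)) <;> norm_num
  -- (2,0)
  · exact Finset.sum_eq_zero fun j _ => by
      have hj := j.isLt; split_ifs <;> (try (exfalso; omega)) <;> norm_num
  -- (2,1)
  · trans (∑ x : Fin n, (if 1 ≤ (x : ℕ) ∧ (x : ℕ) < 2 then (-1 : ℝ) else 0))
    · exact Finset.sum_congr rfl fun j _ => by
        have hj := j.isLt; split_ifs <;> (try (exfalso; omega)) <;> norm_num
    · refine (count_sum' n (-1) _ 1 2 (by omega) fun j hj => Iff.rfl).trans ?_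
      norm_num
  -- (2,2)
  · exact Finset.sum_eq_zero fun j _ => by
      have hj := j.isLt; split_ifs <;> (try (exfalso; omega)) <;> norm_num
  -- (2,3)
  · trans (∑ x : Fin n, (if 1 ≤ (x : ℕ) ∧ (x : ℕ) < 2 then (-1 : ℝ) else 0))
    · exact Finset.sum_congr rfl fun j _ => by
        have hj := j.isLt; split_ifs <;> (try (exfalso; omega)) <;> norm_num
    · refine (count_sum' n (-1) _ 1 2 (by omega) fun j hj => Iff.rfl).trans ?_
      norm_num
  -- (3,0)
  · exact Finset.sum_eq_zero fun j _ => by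
      have hj := j.isLt; split_ifs <;> (try (exfalso; omega)) <;> norm_num
  -- (3,1)
  · trans (∑ x : Fin n, (if 2 ≤ (x : ℕ) ∧ (x : ℕ) < m - n + 3 then (-1 : ℝ) else 0))
    · exact Finset.sum_congr rfl fun j _ => by
        have hj := j.isLt; split_ifs <;> (try (exfalso; omega)) <;> norm_num
    · refine (count_sum' n (-1) _ 2 (m - n + 3) (by omega) fun j hj => Iff.rfl).trans ?_
      have h : m - n + 3 - 2 = m - n + 1 := by omega
      rw [h]; push_cast; ring
  -- (3,2)
  · trans (∑ x : Fin n, (if 2 ≤ (x : ℕ) ∧ (x : ℕ) < m - n + 3 then (1 : ℝ) else 0))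
    · exact Finset.sum_congr rfl fun j _ => by
        have hj := j.isLt; split_ifs <;> (try (exfalso; omega)) <;> norm_num
    · refine (count_sum' n 1 _ 2 (m - n + 3) (by omega) fun j hj => Iff.rfl).trans ?_
      have h : m - n + 3 - 2 = m - n + 1 := by omega
      rw [h]; push_cast; ring
  -- (3,3)
  · exact Finset.sum_eq_zero fun j _ => by
      have hj := j.isLt; split_ifs <;> (try (exfalso; omega)) <;> norm_num

lemma det_fin_four' {R : Type*} [CommRing R] (A : Matrix (Fin 4) (Fin 4) R) :
    det A =
      A 0 0*A 1 1*A 2 2*A 3 3 - A 0 0*A 1 1*A 2 3*A 3 2 - A 0 0*A 1 2*A 2 1*A 3 3 + A 0 0*A 1 2*A 2 3*A 3 1 + A 0 0*A 1 3*A 2 1*A 3 2 - A 0 0*A 1 3*A 2 2*A 3 1 - A 0 1*A 1 0*A 2 2*A 3 3 + A 0 1*A 1 0*A 2 3*A 3 2 + A 0 1*A 1 2*A 2 0*A 3 3 - A 0 1*A 1 2*A 2 3*A 3 0 - A 0 1*A 1 3*A 2 0*A 3 2 + A 0 1*A 1 3*A 2 2*A 3 0 + A 0 2*A 1 0*A 2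 1*A 3 3 - A 0 2*A 1 0*A 2 3*A 3 1 - A 0 2*A 1 1*A 2 0*A 3 3 + A 0 2*A 1 1*A 2 3*A 3 0 + A 0 2*A 1 3*A 2 0*A 3 1 - A 0 2*A 1 3*A 2 1*A 3 0 - A 0 3*A 1 0*A 2 1*A 3 2 + A 0 3*A 1 0*A 2 2*A 3 1 + A 0 3*A 1 1*A 2 0*A 3 2 - A 0 3*A 1 1*A 2 2*A 3 0 - A 0 3*A 1 2*A 2 0*A 3 1 + A 0 3*A 1 2*A 2 1*A 3 0 := by
  rw [Matrix.det_succ_row_zero]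
  simp only [Fin.sum_univ_succ, Matrix.det_fin_three, Matrix.submatrix_apply,
    Fin.succ_zero_eq_one, Fin.succ_one_eq_two, Fin.zero_succAbove, Fin.val_zero, Fin.val_succ,
    Finset.univ_unique, Fin.default_eq_zero, Finset.sum_singleton, Fin.succ_succAbove_zero,
    Fin.succ_succAbove_one, Fin.val_eq_zero, Finset.sum_empty, Fin.isValue]
  norm_num [Fin.succAbove, Fin.lt_def]
  have h1 : (Fin.succ 2 : Fin 4) = 3 := rfl
  have h2 : (Fin.castSucc (2 : Fin 3) : Fin 4) = 2 := rfl
  simp only [h1, h2]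
  ring

set_option maxHeartbeats 1000000 in
lemma charpoly_M4 (n m : ℕ) (hnm : n ≤ m) (hm2 : m + 5 ≤ 2 * n) :
    (!![0, -((n - 1 : ℕ) : ℝ), ((m - n + 1 : ℕ) : ℝ), -1;
       1, 0, 0, 0;
       0, -1, 0, -1;
       0, -((m - n + 1 : ℕ) : ℝ), ((m - n + 1 : ℕ) : ℝ), 0]).charpoly
      = X ^ 4 + C (m : ℝ) * X ^ 2 + C (((m - n + 1) * (2 * n - m - 3) : ℕ) : ℝ) := by
  have hc1 : ((n - 1 : ℕ) : ℝ) = (n : ℝ) - 1 := by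
    push_cast [Nat.cast_sub (by omega : 1 ≤ n)]; ring
  have hc2 : ((m - n + 1 : ℕ) : ℝ) = (m : ℝ) - n + 1 := by
    push_cast [Nat.cast_sub hnm]; ring
  have hc3 : (((m - n + 1) * (2 * n - m - 3) : ℕ) : ℝ)
      = ((m : ℝ) - n + 1) * (2 * n - m - 3) := by
    have h : (2 * n - m - 3 : ℕ) = 2 * n - (m + 3) := by omega
    push_cast [h, Nat.cast_sub hnm, Nat.cast_sub (by omega : m + 3 ≤ 2 * n)]
    ring
  rw [Matrix.charpoly, hc1, hc2, hc3]
  have hch : (!![0, -((n:ℝ) - 1), (m:ℝ) - n + 1, -1;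
       1, 0, 0, 0;
       0, -1, 0, -1;
       0, -((m:ℝ) - n + 1), (m:ℝ) - n + 1, 0]).charmatrix
      = !![X, C ((n:ℝ) - 1), -C ((m:ℝ) - n + 1), C 1;
           -C 1, X, 0, 0;
           0, C 1, X, C 1;
           0, C ((m:ℝ) - n + 1), -C ((m:ℝ) - n + 1), X] := by
    ext i j
    fin_cases i <;> fin_cases j <;>
      simp [charmatrix_apply, Matrix.vecHead, Matrix.vecTail]
  rw [hch, det_fin_four']
  simp [Matrix.vecHead, Matrix.vecTail, _root_.map_sub, _root_.map_add, _root_.map_mul,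
    _root_.map_one, _root_.map_neg, C_0, C_1, map_ofNat]
  ring

/-- The skew characteristic polynomial of `O⁺_{n,m}` is
`λⁿ + m λ^{n-2} + (m-n+1)(2n-m-3) λ^{n-4}`. -/
theorem skew_charpoly_O
    {n m : ℕ} (hnm : n ≤ m) (hm2 : m < 2 * (n - 2)) :
    (skewO n m).charpoly =
      X ^ n + C (m : ℝ) * X ^ (n - 2) +
        C (((m - n + 1) * (2 * n - m - 3) : ℕ) : ℝ) * X ^ (n - 4) := by
  have hm5 : m + 5 ≤ 2 * n := by omega
  have hn5 : 5 ≤ n := by omega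
  rw [skewO_factor n m, charpoly_mul_comm_pow (by omega : 4 ≤ n) (cA n m) ((cB n m)ᵀ),
    BA_eq n m hnm hm5, charpoly_M4 n m hnm hm5]
  have h4 : n - 4 + 4 = n := by omega
  have h2 : n - 4 + 2 = n - 2 := by omega
  rw [show (X : ℝ[X]) ^ (n - 4) *
        (X ^ 4 + C (m : ℝ) * X ^ 2 + C (((m - n + 1) * (2 * n - m - 3) : ℕ) : ℝ))
      = X ^ (n - 4) * X ^ 4 + C (m : ℝ) * (X ^ (n - 4) * X ^ 2)
        + C (((m - n + 1) * (2 * n - m - 3) : ℕ) : ℝ) * X ^ (n - 4) from by ring,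
    ← pow_add, ← pow_add, h4, h2]
end

section
/- Let B^+_{n,m} be the oriented graph obtained from O^+_{n,m+1} by deleting the arc (v₁,v₂). Its skew characteristic polynomial is λⁿ + m·λ^{n-2} + (m-n+2)(2n-m-4)·λ^{n-4}. -/
open Matrix Polynomial

/-- The skew-adjacency matrix of the oriented graph `B⁺_{n,m}`, obtained from
`O⁺_{n,m+1}` by deleting the arc `(v₁, v₂)`: the star with center `v₁ = 0` on the
vertices other than `v₂ = 1`, all arcs directed away from `v₁`, together with
`m - n + 2` further arcs with tails `2, …, m-n+3` and common head `v₂ = 1`. -/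
def skewB (n m : ℕ) : Matrix (Fin n) (Fin n) ℝ :=
  Matrix.of fun i j =>
    if (i : ℕ) = 0 ∧ (j : ℕ) ≠ 0 ∧ (j : ℕ) ≠ 1 then 1
    else if (j : ℕ) = 0 ∧ (i : ℕ) ≠ 0 ∧ (i : ℕ) ≠ 1 then -1
    else if (j : ℕ) = 1 ∧ 2 ≤ (i : ℕ) ∧ (i : ℕ) ≤ m - n + 3 then 1
    else if (i : ℕ) = 1 ∧ 2 ≤ (j : ℕ) ∧ (j : ℕ) ≤ m - n + 3 then -1
    else 0

/-- Left factor of the rank-4 factorization of `skewB`. -/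
def Amat (n k : ℕ) : Matrix (Fin n) (Fin 4) ℝ :=
  Matrix.of fun i => ![if (i : ℕ) = 0 then 1 else 0,
    -(if 2 ≤ (i : ℕ) then 1 else 0),
    if 2 ≤ (i : ℕ) ∧ (i : ℕ) ≤ k + 1 then 1 else 0,
    -(if (i : ℕ) = 1 then 1 else 0)]

/-- Right factor of the rank-4 factorization of `skewB`. -/
def Bmat (n k : ℕ) : Matrix (Fin 4) (Fin n) ℝ :=
  Matrix.of fun j i => ![if 2 ≤ (i : ℕ) then (1:ℝ) else 0,
    if (i : ℕ) = 0 then 1 else 0,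
    if (i : ℕ) = 1 then 1 else 0,
    if 2 ≤ (i : ℕ) ∧ (i : ℕ) ≤ k + 1 then 1 else 0] j

lemma sum_ind {n : ℕ} (c : ℝ) (p : ℕ → Prop) [DecidablePred p] (f : Fin n → ℝ)
    (hf : ∀ i : Fin n, f i = c * (if p (i : ℕ) then 1 else 0)) :
    ∑ i, f i = c * (((Finset.range n).filter p).card : ℝ) := by
  rw [Finset.sum_congr rfl (fun i _ => hf i), ← Finset.mul_sum,
    Fin.sum_univ_eq_sum_range (fun i => if p i then (1:ℝ) else 0) n, Finset.sum_boole]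

lemma det_aux {K : Type*} [Field K] {n s : ℕ} (hs : s ≤ n) {x : K} (hx : x ≠ 0)
    (A : Matrix (Fin n) (Fin s) K) (B : Matrix (Fin s) (Fin n) K) :
    (x • (1 : Matrix (Fin n) (Fin n) K) - A * B).det
      = x ^ (n - s) * (x • (1 : Matrix (Fin s) (Fin s) K) - B * A).det := by
  have h1 : x • ((1 : Matrix (Fin n) (Fin n) K) - (x⁻¹ • A) * B)
      = x • (1 : Matrix (Fin n) (Fin n) K) - A * B := by
    rw [smul_sub, Matrix.smul_mul, smul_smul, mul_inv_cancel₀ hx, one_smul]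
  have h2 : x • ((1 : Matrix (Fin s) (Fin s) K) - B * (x⁻¹ • A))
      = x • (1 : Matrix (Fin s) (Fin s) K) - B * A := by
    rw [smul_sub, Matrix.mul_smul, smul_smul, mul_inv_cancel₀ hx, one_smul]
  rw [← h1, ← h2, Matrix.det_smul, Matrix.det_smul, Matrix.det_one_sub_mul_comm,
    Fintype.card_fin, Fintype.card_fin, ← mul_assoc, ← pow_add, Nat.sub_add_cancel hs]

set_option maxHeartbeats 2000000 in
set_option synthInstance.maxHeartbeats 1000000 in
/-- The skew characteristic polynomial of `B⁺_{n,m}` is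
`λⁿ + m λ^{n-2} + (m-n+2)(2n-m-4) λ^{n-4}`. -/
theorem skew_charpoly_B
    {n m : ℕ} (hnm : n ≤ m) (hm2 : m < 2 * (n - 2)) :
    (skewB n m).charpoly =
      X ^ n + C (m : ℝ) * X ^ (n - 2) +
        C (((m - n + 2) * (2 * n - m - 4) : ℕ) : ℝ) * X ^ (n - 4) := by
  have hn5 : 5 ≤ n := by omega
  set k : ℕ := m - n + 2 with hkdef
  have hk2 : 2 ≤ k := by omega
  have hkn : k + 1 ≤ n - 2 := by omega
  -- the factorization
  have hfact : skewB n m = Amat n k * Bmat n k := by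
    ext i j
    rw [Matrix.mul_apply, Fin.sum_univ_four]
    simp only [skewB, Amat, Bmat, Matrix.of_apply, Matrix.cons_val_zero, Matrix.cons_val_one,
      Matrix.head_cons, Matrix.cons_val_two, Matrix.tail_cons, Matrix.cons_val_three]
    split_ifs <;> first | (exfalso; omega) | norm_num
  -- the small product
  have hcard0 : (((Finset.range n).filter (fun i => i = 0)).card : ℝ) = 1 := by
    have : (Finset.range n).filter (fun i => i = 0) = {0} := by
      ext i; simp only [Finset.mem_filter, Finset.mem_range, Finset.mem_singleton]; omega
    rw [this]; simp
  have hcard1 : (((Finset.range n).filter (fun i => i = 1)).card : ℝ) = 1 := by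
    have : (Finset.range n).filter (fun i => i = 1) = {1} := by
      ext i; simp only [Finset.mem_filter, Finset.mem_range, Finset.mem_singleton]; omega
    rw [this]; simp
  have hcardu : (((Finset.range n).filter (fun i => 2 ≤ i)).card : ℝ) = ((n - 2 : ℕ) : ℝ) := by
    have : (Finset.range n).filter (fun i => 2 ≤ i) = Finset.Ico 2 n := by
      ext i; simp only [Finset.mem_filter, Finset.mem_range, Finset.mem_Ico]; omega
    rw [this, Nat.card_Ico]
  have hcardw : (((Finset.range n).filter (fun i => 2 ≤ i ∧ i ≤ k + 1)).card : ℝ) = (k : ℝ) := by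
    have : (Finset.range n).filter (fun i => 2 ≤ i ∧ i ≤ k + 1) = Finset.Icc 2 (k+1) := by
      ext i; simp only [Finset.mem_filter, Finset.mem_range, Finset.mem_Icc]; omega
    rw [this, Nat.card_Icc]
    push_cast
    ring
  have hBA : Bmat n k * Amat n k =
      !![0, -((n - 2 : ℕ) : ℝ), (k : ℝ), 0; 1, 0, 0, 0; 0, 0, 0, -1; 0, -(k : ℝ), (k : ℝ), 0] := by
    ext r c
    fin_cases r <;> fin_cases c <;>
      rw [Matrix.mul_apply] <;>
      simp only [Bmat, Amat, Matrix.of_apply, Fin.zero_eta, Fin.mk_one, Fin.reduceFinMk,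
        Matrix.cons_val_zero, Matrix.cons_val_one,
        Matrix.head_cons, Matrix.cons_val_two, Matrix.tail_cons, Matrix.cons_val_three,
        Matrix.cons_val', Matrix.empty_val', Matrix.cons_val_fin_one, Matrix.head_fin_const]
    · rw [sum_ind 0 (fun _ => True) _ (fun i => by split_ifs <;> first | ring1 | (exfalso; omega))]
      norm_num
    · rw [sum_ind (-1) (fun i => 2 ≤ i) _
        (fun i => by split_ifs <;> first | ring1 | (exfalso; omega)), hcardu]
      norm_num
    · rw [sum_ind 1 (fun i => 2 ≤ i ∧ i ≤ k + 1) _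
        (fun i => by split_ifs <;> first | ring1 | (exfalso; omega)), hcardw]
      norm_num
    · rw [sum_ind 0 (fun _ => True) _ (fun i => by split_ifs <;> first | ring1 | (exfalso; omega))]
      norm_num
    · rw [sum_ind 1 (fun i => i = 0) _
        (fun i => by split_ifs <;> first | ring1 | (exfalso; omega)), hcard0]
      norm_num
    · rw [sum_ind 0 (fun _ => True) _ (fun i => by split_ifs <;> first | ring1 | (exfalso; omega))]
      norm_num
    · rw [sum_ind 0 (fun _ => True) _ (fun i => by split_ifs <;> first | ring1 | (exfalso; omega))]
      norm_num
    · rw [sum_ind 0 (fun _ => True) _ (fun i => by split_ifs <;> first | ring1 | (exfalso; omega))]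
      norm_num
    · rw [sum_ind 0 (fun _ => True) _ (fun i => by split_ifs <;> first | ring1 | (exfalso; omega))]
      norm_num
    · rw [sum_ind 0 (fun _ => True) _ (fun i => by split_ifs <;> first | ring1 | (exfalso; omega))]
      norm_num
    · rw [sum_ind 0 (fun _ => True) _ (fun i => by split_ifs <;> first | ring1 | (exfalso; omega))]
      norm_num
    · rw [sum_ind (-1) (fun i => i = 1) _
        (fun i => by split_ifs <;> first | ring1 | (exfalso; omega)), hcard1]
      norm_num
    · rw [sum_ind 0 (fun _ => True) _ (fun i => by split_ifs <;> first | ring1 | (exfalso; omega))]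
      norm_num
    · rw [sum_ind (-1 : ℝ) (fun i => 2 ≤ i ∧ i ≤ k + 1) _
        (fun i => by split_ifs <;> first | ring1 | (exfalso; omega)), hcardw]
      norm_num
    · rw [sum_ind 1 (fun i => 2 ≤ i ∧ i ≤ k + 1) _
        (fun i => by split_ifs <;> first | ring1 | (exfalso; omega)), hcardw]
      norm_num
    · rw [sum_ind 0 (fun _ => True) _ (fun i => by split_ifs <;> first | ring1 | (exfalso; omega))]
      norm_num
  -- pass to the fraction field
  set φ : Polynomial ℝ →+* RatFunc ℝ :=
    (algebraMap (Polynomial ℝ) (RatFunc ℝ) : Polynomial ℝ →+* RatFunc ℝ) with hφdef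
  have hφ : Function.Injective φ := IsFractionRing.injective (Polynomial ℝ) (RatFunc ℝ)
  set ψ : ℝ →+* RatFunc ℝ := φ.comp (C : ℝ →+* Polynomial ℝ) with hψdef
  set x : RatFunc ℝ := φ X with hxdef
  have hx : x ≠ 0 := by
    simp only [hxdef, ne_eq, map_eq_zero_iff φ hφ]
    exact Polynomial.X_ne_zero
  apply hφ
  -- rewrite the charpoly as a determinant and map it
  have hcp : (skewB n m).charpoly
      = ((X : Polynomial ℝ) • (1 : Matrix (Fin n) (Fin n) (Polynomial ℝ))
          - (skewB n m).map C).det := by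
    rw [Matrix.charpoly]
    congr 1
    rw [charmatrix, Matrix.scalar_apply, ← Matrix.smul_one_eq_diagonal]
    rfl
  rw [hcp, RingHom.map_det]
  have hmap : (((X : Polynomial ℝ) • (1 : Matrix (Fin n) (Fin n) (Polynomial ℝ))
        - (skewB n m).map C).map φ)
      = x • (1 : Matrix (Fin n) (Fin n) (RatFunc ℝ))
          - ((Amat n k).map ψ) * ((Bmat n k).map ψ) := by
    rw [hfact, ← Matrix.map_mul]
    ext i j
    simp only [Matrix.map_apply, Matrix.sub_apply, Matrix.smul_apply, smul_eq_mul,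
      _root_.map_sub, _root_.map_mul, Matrix.one_apply, apply_ite φ, _root_.map_one,
      _root_.map_zero, hxdef, hψdef, RingHom.comp_apply]
  rw [RingHom.mapMatrix_apply, hmap, det_aux (by omega) hx, ← Matrix.map_mul, hBA]
  -- compute the 4×4 determinant
  have hdet : ((x • (1 : Matrix (Fin 4) (Fin 4) (RatFunc ℝ)) -
      (!![0, -((n - 2 : ℕ) : ℝ), (k : ℝ), 0; 1, 0, 0, 0; 0, 0, 0, -1;
          0, -(k : ℝ), (k : ℝ), 0]).map ψ)).det
      = x ^ 4 + (ψ ((n - 2 : ℕ) : ℝ) + ψ (k : ℝ)) * x ^ 2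
        + (ψ (k : ℝ) * ψ ((n - 2 : ℕ) : ℝ) - ψ (k : ℝ) * ψ (k : ℝ)) := by
    simp (config := { decide := true }) [Matrix.det_succ_row_zero, Fin.sum_univ_succ,
      Matrix.one_apply, smul_eq_mul, _root_.map_neg, _root_.map_zero, _root_.map_one,
      Fin.succAbove]
    ring
  rw [hdet]
  -- identify the coefficients
  have ha : ψ ((m : ℕ) : ℝ) = ψ ((n - 2 : ℕ) : ℝ) + ψ ((k : ℕ) : ℝ) := by
    rw [← _root_.map_add]
    congr 1
    have h : (n - 2) + k = m := by omega
    exact_mod_cast congrArg (fun t : ℕ => (t : ℝ)) h.symm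
  have hc : ψ ((((m - n + 2) * (2 * n - m - 4) : ℕ) : ℕ) : ℝ)
      = ψ (k : ℝ) * ψ ((n - 2 : ℕ) : ℝ) - ψ (k : ℝ) * ψ (k : ℝ) := by
    rw [← _root_.map_mul, ← _root_.map_mul, ← _root_.map_sub]
    congr 1
    have h1 : (2 * n - m - 4 : ℕ) = (n - 2) - k := by omega
    have h2 : k ≤ n - 2 := by omega
    push_cast [h1, Nat.cast_sub h2]
    rw [show ((m - n : ℕ) : ℝ) = (k : ℝ) - 2 by rw [hkdef]; push_cast; ring]
    ring
  rw [_root_.map_add, _root_.map_add, _root_.map_mul, _root_.map_mul, _root_.map_pow, _root_.map_pow, _root_.map_pow, ← hxdef]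
  have hCm : φ (C ((m : ℕ) : ℝ)) = ψ ((m : ℕ) : ℝ) := rfl
  have hCc : φ (C ((((m - n + 2) * (2 * n - m - 4) : ℕ)) : ℝ))
      = ψ ((((m - n + 2) * (2 * n - m - 4) : ℕ)) : ℝ) := rfl
  rw [hCm, hCc, ha, hc]
  have e1 : x ^ n = x ^ (n - 4) * x ^ 4 := by rw [← pow_add]; congr 1; omega
  have e2 : x ^ (n - 2) = x ^ (n - 4) * x ^ 2 := by rw [← pow_add]; congr 1; omega
  rw [e1, e2]
  ring
end

section
/- Let G^σ be an oriented graph on n vertices whose skew characteristic polynomial is Σ_{i} a_{2i} λ^{n-2i} with all a_{2i} ≥ 0. Then the skew energy (the sum of absolute values of eigenvalues of the skew-adjacency matrix) is a monotonically non-decreasing function of the coefficients: if two oriented graphs G₁, G₂ on n vertices satisfy a_{2i}(G₁) ≤ a_{2i}(G₂) for all i, then E_s(G₁) ≤ E_s(G₂). -/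
open Matrix Polynomial BigOperators

namespace SkewEnergyAux

open Real Set MeasureTheory Filter

lemma sqrt_add_le (a b : ℝ) (ha : 0 ≤ a) (hb : 0 ≤ b) :
    Real.sqrt (a + b) ≤ Real.sqrt a + Real.sqrt b := by
  have h1 : a + b ≤ (Real.sqrt a + Real.sqrt b) ^ 2 := by
    nlinarith [Real.sq_sqrt ha, Real.sq_sqrt hb,
      mul_nonneg (Real.sqrt_nonneg a) (Real.sqrt_nonneg b)]
  calc Real.sqrt (a + b) ≤ Real.sqrt ((Real.sqrt a + Real.sqrt b) ^ 2) := Real.sqrt_le_sqrt h1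
    _ = Real.sqrt a + Real.sqrt b := Real.sqrt_sq (by positivity)

lemma log_one_add_le {y : ℝ} (hy : 0 ≤ y) :
    Real.log (1 + y) ≤ 4 * Real.sqrt (Real.sqrt y) := by
  have h0 : (0:ℝ) < 1 + y := by linarith
  have hpow : Real.sqrt (Real.sqrt (1 + y)) ^ 4 = 1 + y := by
    have : Real.sqrt (Real.sqrt (1+y)) ^ 4 = (Real.sqrt (Real.sqrt (1+y)) ^ 2) ^ 2 := by ring
    rw [this, Real.sq_sqrt (Real.sqrt_nonneg _), Real.sq_sqrt h0.le]
  have h1 : Real.log (1 + y) = 4 * Real.log (Real.sqrt (Real.sqrt (1 + y))) := by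
    rw [show (4:ℝ) * Real.log (Real.sqrt (Real.sqrt (1+y)))
        = ((4:ℕ):ℝ) * Real.log (Real.sqrt (Real.sqrt (1+y))) by norm_num,
      ← Real.log_pow, hpow]
  have h2 : Real.sqrt (Real.sqrt (1 + y)) ≤ 1 + Real.sqrt (Real.sqrt y) := by
    calc Real.sqrt (Real.sqrt (1 + y)) ≤ Real.sqrt (1 + Real.sqrt y) := by
          apply Real.sqrt_le_sqrt
          simpa using sqrt_add_le 1 y zero_le_one hy
      _ ≤ 1 + Real.sqrt (Real.sqrt y) := by
          simpa using sqrt_add_le 1 (Real.sqrt y) zero_le_one (Real.sqrt_nonneg y)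
  have h3 := Real.log_le_sub_one_of_pos (x := Real.sqrt (Real.sqrt (1+y))) (by positivity)
  linarith

lemma continuousOn_log_one_add (a : ℝ) (ha : 0 ≤ a) :
    ContinuousOn (fun x : ℝ => Real.log (1 + a / x ^ 2)) (Ioi 0) := by
  apply ContinuousOn.log
  · exact continuousOn_const.add (continuousOn_const.div (by fun_prop)
      (fun x hx => pow_ne_zero 2 (ne_of_gt hx)))
  · intro x hx
    have hx : (0:ℝ) < x := hx
    positivity

lemma integrableOn_log_one_add (a : ℝ) (ha : 0 ≤ a) :
    IntegrableOn (fun x : ℝ => Real.log (1 + a / x ^ 2)) (Ioi 0) := by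
  rw [show Ioi (0:ℝ) = Ioc 0 1 ∪ Ioi 1 from (Ioc_union_Ioi_eq_Ioi zero_le_one).symm]
  apply IntegrableOn.union
  · apply Integrable.mono'
      (g := fun x : ℝ => 4 * Real.sqrt (Real.sqrt a) * x ^ (-(1/2) : ℝ))
    · apply Integrable.const_mul
      have h := (intervalIntegral.intervalIntegrable_rpow' (a := 0) (b := 1)
        (r := -(1/2)) (by norm_num))
      rw [intervalIntegrable_iff_integrableOn_Ioc_of_le zero_le_one] at h
      exact h
    · exact ((continuousOn_log_one_add a ha).mono Ioc_subset_Ioi_self).aestronglyMeasurable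
        measurableSet_Ioc
    · rw [ae_restrict_iff' measurableSet_Ioc]
      filter_upwards with x hx
      obtain ⟨hx0, hx1⟩ := hx
      have hdiv : 0 ≤ a / x ^ 2 := by positivity
      rw [Real.norm_of_nonneg (Real.log_nonneg (by linarith))]
      have h1 : Real.log (1 + a / x ^ 2) ≤ 4 * Real.sqrt (Real.sqrt (a / x ^ 2)) :=
        log_one_add_le hdiv
      have h2 : Real.sqrt (a / x ^ 2) = Real.sqrt a / x := by
        rw [Real.sqrt_div ha, Real.sqrt_sq hx0.le]
      have h3 : Real.sqrt (Real.sqrt a / x) = Real.sqrt (Real.sqrt a) / Real.sqrt x := by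
        rw [Real.sqrt_div (Real.sqrt_nonneg a)]
      have h4 : x ^ (-(1/2) : ℝ) = (Real.sqrt x)⁻¹ := by
        rw [Real.rpow_neg hx0.le, ← Real.sqrt_eq_rpow]
      rw [h2, h3] at h1
      rw [h4]
      calc Real.log (1 + a / x ^ 2) ≤ 4 * (Real.sqrt (Real.sqrt a) / Real.sqrt x) := h1
        _ = 4 * Real.sqrt (Real.sqrt a) * (Real.sqrt x)⁻¹ := by ring
  · apply Integrable.mono' (g := fun x : ℝ => a * x ^ (-2 : ℝ))
    · exact (integrableOn_Ioi_rpow_of_lt (by norm_num) one_pos).const_mul a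
    · exact ((continuousOn_log_one_add a ha).mono (Ioi_subset_Ioi zero_le_one)).aestronglyMeasurable
        measurableSet_Ioi
    · rw [ae_restrict_iff' measurableSet_Ioi]
      filter_upwards with x hx
      have hx1 : (1:ℝ) < x := hx
      have hx0 : (0:ℝ) < x := by linarith
      have hdiv : 0 ≤ a / x ^ 2 := by positivity
      rw [Real.norm_of_nonneg (Real.log_nonneg (by linarith))]
      have h1 : Real.log (1 + a / x ^ 2) ≤ a / x ^ 2 := by
        have := Real.log_le_sub_one_of_pos (x := 1 + a / x^2) (by linarith)
        linarith
      have h2 : x ^ (-2 : ℝ) = (x ^ 2)⁻¹ := by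
        rw [show (-2 : ℝ) = -(2:ℕ) by norm_num, Real.rpow_neg hx0.le, Real.rpow_natCast]
      rw [h2]
      calc Real.log (1 + a / x^2) ≤ a / x ^ 2 := h1
        _ = a * (x^2)⁻¹ := by ring

lemma integral_log_one_add (a : ℝ) (ha : 0 ≤ a) :
    ∫ x in Ioi (0:ℝ), Real.log (1 + a / x ^ 2) = Real.pi * Real.sqrt a := by
  rcases ha.eq_or_lt with h | h
  · simp [← h]
  set sa := Real.sqrt a with hsa_def
  have hsa : 0 < sa := Real.sqrt_pos.mpr h
  have hsa2 : sa ^ 2 = a := Real.sq_sqrt ha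
  set F := fun x : ℝ => x * Real.log (1 + a / x ^ 2) + 2 * sa * Real.arctan (x / sa) with hF
  have hF0 : F 0 = 0 := by simp [hF]
  have hderiv : ∀ x ∈ Ioi (0:ℝ), HasDerivAt F (Real.log (1 + a / x ^ 2)) x := by
    intro x hx
    have hx0 : (0:ℝ) < x := hx
    have hxne : x ≠ 0 := hx0.ne'
    have harg : (0:ℝ) < 1 + a / x ^ 2 := by positivity
    have h1 : HasDerivAt (fun y : ℝ => 1 + a / y ^ 2)
        ((0 * x ^ 2 - a * (2 * x ^ 1)) / (x ^ 2) ^ 2) x := by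
      have := (hasDerivAt_const x (1:ℝ)).add
        (((hasDerivAt_const x a).div (hasDerivAt_pow 2 x) (pow_ne_zero 2 hxne)))
      refine this.congr_deriv ?_
      norm_num
    have h2 : HasDerivAt (fun y : ℝ => Real.log (1 + a / y ^ 2))
        ((0 * x ^ 2 - a * (2 * x ^ 1)) / (x ^ 2) ^ 2 / (1 + a / x ^ 2)) x :=
      h1.log harg.ne'
    have h3 : HasDerivAt (fun y : ℝ => y * Real.log (1 + a / y ^ 2))
        (1 * Real.log (1 + a / x ^ 2) +
          x * ((0 * x ^ 2 - a * (2 * x ^ 1)) / (x ^ 2) ^ 2 / (1 + a / x ^ 2))) x :=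
      (hasDerivAt_id x).mul h2
    have h4 : HasDerivAt (fun y : ℝ => Real.arctan (y / sa))
        ((1 + (x / sa) ^ 2)⁻¹ * (1 / sa)) x := by
      have := (Real.hasDerivAt_arctan (x / sa)).comp x ((hasDerivAt_id x).div_const sa)
      exact this.congr_deriv (by simp [one_div])
    have h5 := h3.add (h4.const_mul (2 * sa))
    refine h5.congr_deriv ?_
    have hkey : x * ((0 * x ^ 2 - a * (2 * x ^ 1)) / (x ^ 2) ^ 2 / (1 + a / x ^ 2))
        + 2 * sa * ((1 + (x / sa) ^ 2)⁻¹ * (1 / sa)) = 0 := by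
      have hxa : (0:ℝ) < x ^ 2 + a := by positivity
      rw [← hsa2]
      field_simp
      ring
    linarith [hkey]
  have hcont : ContinuousWithinAt F (Ici 0) 0 := by
    apply ContinuousWithinAt.add
    · rw [ContinuousWithinAt]
      rw [show (0:ℝ) * Real.log (1 + a / 0 ^ 2) = 0 by simp]
      apply squeeze_zero'
      · filter_upwards [eventually_mem_nhdsWithin] with x hx
        have hx0 : (0:ℝ) ≤ x := hx
        rcases hx0.eq_or_lt with h0 | h0
        · simp [← h0]
        · have : 0 ≤ Real.log (1 + a / x ^ 2) := Real.log_nonneg (by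
            have : 0 ≤ a / x ^ 2 := by positivity
            linarith)
          positivity
      · filter_upwards [eventually_mem_nhdsWithin] with x hx
        have hx0 : (0:ℝ) ≤ x := hx
        show x * Real.log (1 + a / x ^ 2) ≤ 4 * Real.sqrt (Real.sqrt a) * Real.sqrt x
        rcases hx0.eq_or_lt with h0 | h0
        · simp [← h0]
        · have hb := log_one_add_le (y := a / x ^ 2) (by positivity)
          have h2 : Real.sqrt (a / x ^ 2) = Real.sqrt a / x := by
            rw [Real.sqrt_div ha, Real.sqrt_sq h0.le]
          have h3 : Real.sqrt (Real.sqrt a / x) = Real.sqrt (Real.sqrt a) / Real.sqrt x := by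
            rw [Real.sqrt_div (Real.sqrt_nonneg a)]
          rw [h2, h3] at hb
          have hxs : 0 < Real.sqrt x := Real.sqrt_pos.mpr h0
          calc x * Real.log (1 + a / x ^ 2)
              ≤ x * (4 * (Real.sqrt (Real.sqrt a) / Real.sqrt x)) := by
                exact mul_le_mul_of_nonneg_left hb h0.le
            _ = 4 * Real.sqrt (Real.sqrt a) * (x / Real.sqrt x) := by ring
            _ = 4 * Real.sqrt (Real.sqrt a) * Real.sqrt x := by rw [Real.div_sqrt]
      · have : Tendsto (fun x : ℝ => 4 * Real.sqrt (Real.sqrt a) * Real.sqrt x)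
            (nhdsWithin 0 (Ici 0)) (nhds (4 * Real.sqrt (Real.sqrt a) * Real.sqrt 0)) := by
          apply Tendsto.const_mul
          exact (Real.continuous_sqrt.continuousAt).continuousWithinAt
        simpa using this
    · exact (continuous_const.mul (Real.continuous_arctan.comp
        (continuous_id.div_const sa))).continuousWithinAt
  have hlim : Tendsto F atTop (nhds (Real.pi * sa)) := by
    have hl1 : Tendsto (fun x : ℝ => x * Real.log (1 + a / x ^ 2)) atTop (nhds 0) := by
      apply squeeze_zero'
      · filter_upwards [eventually_gt_atTop 0] with x hx
        have : 0 ≤ Real.log (1 + a / x ^ 2) := Real.log_nonneg (by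
          have : 0 ≤ a / x ^ 2 := by positivity
          linarith)
        positivity
      · filter_upwards [eventually_gt_atTop 0] with x hx
        have h1 : Real.log (1 + a / x ^ 2) ≤ a / x ^ 2 := by
          have := Real.log_le_sub_one_of_pos (x := 1 + a / x ^ 2) (by positivity)
          linarith
        calc x * Real.log (1 + a / x ^ 2) ≤ x * (a / x ^ 2) :=
              mul_le_mul_of_nonneg_left h1 hx.le
          _ = a * x⁻¹ := by field_simp
      · simpa using tendsto_inv_atTop_zero.const_mul a
    have hl2 : Tendsto (fun x : ℝ => 2 * sa * Real.arctan (x / sa)) atTop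
        (nhds (2 * sa * (Real.pi / 2))) := by
      apply Tendsto.const_mul
      apply tendsto_nhds_of_tendsto_nhdsWithin (a := Real.pi / 2)
      exact Real.tendsto_arctan_atTop.comp (tendsto_id.atTop_div_const hsa)
    have := hl1.add hl2
    simp only [zero_add] at this
    convert this using 2
    ring
  have := integral_Ioi_of_hasDerivAt_of_tendsto hcont hderiv
    ((integrableOn_log_one_add a ha)) hlim
  rw [this, hF0, sub_zero]

lemma multiset_integrable_and_integral (m : Multiset ℝ) (hm : ∀ s ∈ m, 0 ≤ s) :
    IntegrableOn (fun x : ℝ => (m.map (fun s => Real.log (1 + s / x ^ 2))).sum) (Ioi 0)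
    ∧ ∫ x in Ioi (0:ℝ), (m.map (fun s => Real.log (1 + s / x ^ 2))).sum
        = Real.pi * (m.map Real.sqrt).sum := by
  induction m using Multiset.induction_on with
  | empty => simp [IntegrableOn, integrable_zero]
  | cons s m ih =>
    have hs : 0 ≤ s := hm s (Multiset.mem_cons_self s m)
    have hm' : ∀ t ∈ m, 0 ≤ t := fun t ht => hm t (Multiset.mem_cons_of_mem ht)
    obtain ⟨ih1, ih2⟩ := ih hm'
    have heq : (fun x : ℝ => ((s ::ₘ m).map (fun t => Real.log (1 + t / x ^ 2))).sum)
        = fun x : ℝ => Real.log (1 + s / x ^ 2)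
          + (m.map (fun t => Real.log (1 + t / x ^ 2))).sum := by
      funext x; simp
    constructor
    · rw [heq]; exact (integrableOn_log_one_add s hs).add ih1
    · rw [heq, integral_add (integrableOn_log_one_add s hs) ih1,
        integral_log_one_add s hs, ih2]
      simp [mul_add]

lemma sum_sqrt_le_sum_sqrt (m₁ m₂ : Multiset ℝ)
    (h₁ : ∀ s ∈ m₁, 0 ≤ s) (h₂ : ∀ s ∈ m₂, 0 ≤ s)
    (h : ∀ x : ℝ, 0 < x →
      (m₁.map (fun s => Real.log (1 + s / x ^ 2))).sum
        ≤ (m₂.map (fun s => Real.log (1 + s / x ^ 2))).sum) :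
    (m₁.map Real.sqrt).sum ≤ (m₂.map Real.sqrt).sum := by
  obtain ⟨hi₁, he₁⟩ := multiset_integrable_and_integral m₁ h₁
  obtain ⟨hi₂, he₂⟩ := multiset_integrable_and_integral m₂ h₂
  have hπ : (0:ℝ) < Real.pi := Real.pi_pos
  rw [← mul_le_mul_iff_right₀ hπ, ← he₁, ← he₂]
  apply setIntegral_mono_on hi₁ hi₂ measurableSet_Ioi
  intro x hx
  exact h x hx

lemma charpoly_eval' {m : Type*} [DecidableEq m] [Fintype m] {R : Type*} [CommRing R]
    (M : Matrix m m R) (r : R) :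
    M.charpoly.eval r = (Matrix.scalar m r - M).det := by
  rw [Matrix.charpoly, _root_.eval_det, Matrix.matPolyEquiv_charmatrix]
  simp

lemma skew_eval_neg {n : ℕ} (S : Matrix (Fin n) (Fin n) ℝ) (hskew : Sᵀ = -S) (x : ℝ) :
    S.charpoly.eval (-x) = (-1) ^ n * S.charpoly.eval x := by
  rw [charpoly_eval', charpoly_eval']
  have h1 : Matrix.scalar (Fin n) (-x) - S = -(Matrix.scalar (Fin n) x + S) := by
    rw [map_neg]; abel
  have h2 : (Matrix.scalar (Fin n) x + S)ᵀ = Matrix.scalar (Fin n) x - S := by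
    rw [Matrix.transpose_add, hskew, sub_eq_add_neg]
    congr 1
    ext i j
    simp [Matrix.scalar_apply, Matrix.diagonal_apply, eq_comm]
  rw [h1, Matrix.det_neg, Fintype.card_fin, ← Matrix.det_transpose (Matrix.scalar (Fin n) x + S),
    h2]

lemma coeff_comp_neg_X (p : ℝ[X]) (k : ℕ) :
    (p.comp (-X)).coeff k = (-1) ^ k * p.coeff k := by
  rw [Polynomial.comp_eq_sum_left, Polynomial.sum, Polynomial.finset_sum_coeff]
  have hterm : ∀ e ∈ p.support, (Polynomial.C (p.coeff e) * (-X) ^ e).coeff k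
      = if e = k then (-1) ^ k * p.coeff k else 0 := by
    intro e _
    rw [neg_pow, show ((-1:ℝ[X])^e * X^e) = Polynomial.C ((-1:ℝ)^e) * X ^ e by simp,
      ← mul_assoc, ← Polynomial.C_mul, Polynomial.coeff_C_mul, Polynomial.coeff_X_pow]
    by_cases he : e = k
    · subst he; simp [mul_comm]
    · simp [he, if_neg (Ne.symm he)]
  rw [Finset.sum_congr rfl hterm]
  rw [Finset.sum_ite_eq' p.support k (fun _ => (-1) ^ k * p.coeff k)]
  by_cases hk : k ∈ p.support
  · simp [hk]
  · simp [hk, Polynomial.notMem_support_iff.mp hk]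

lemma skew_coeff_eq_zero {n : ℕ} (S : Matrix (Fin n) (Fin n) ℝ) (hskew : Sᵀ = -S)
    (k : ℕ) (hk : ¬ Even (n + k)) : S.charpoly.coeff k = 0 := by
  have hcomp : S.charpoly.comp (-X) = Polynomial.C ((-1:ℝ) ^ n) * S.charpoly := by
    apply Polynomial.funext
    intro x
    rw [Polynomial.eval_comp, Polynomial.eval_neg, Polynomial.eval_X,
      skew_eval_neg S hskew, Polynomial.eval_mul, Polynomial.eval_C]
  have h1 := congrArg (fun p => Polynomial.coeff p k) hcomp
  simp only [coeff_comp_neg_X, Polynomial.coeff_C_mul] at h1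
  have hodd : Odd (n + k) := Nat.not_even_iff_odd.mp hk
  have h2 : ((-1:ℝ)) ^ n * (-1) ^ k = -1 := by
    rw [← pow_add]; exact Odd.neg_one_pow hodd
  have h3 : ((-1:ℝ) ^ n) * ((-1) ^ k * S.charpoly.coeff k)
      = ((-1:ℝ) ^ n) * ((-1:ℝ) ^ n * S.charpoly.coeff k) := by rw [h1]
  have h4 : ((-1:ℝ) ^ n) * ((-1:ℝ) ^ n) = 1 := by
    rw [← pow_add]; exact Even.neg_one_pow ⟨n, rfl⟩
  nlinarith [h2, h3, h4]

lemma eval_nonneg_and_le {n : ℕ} (P₁ P₂ : ℝ[X]) (hd₁ : P₁.natDegree = n)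
    (hd₂ : P₂.natDegree = n)
    (hz₁ : ∀ k, ¬ Even (n + k) → P₁.coeff k = 0)
    (hz₂ : ∀ k, ¬ Even (n + k) → P₂.coeff k = 0)
    (hpos₁ : ∀ i ≤ n / 2, 0 ≤ P₁.coeff (n - 2 * i))
    (hle : ∀ i ≤ n / 2, P₁.coeff (n - 2 * i) ≤ P₂.coeff (n - 2 * i))
    {x : ℝ} (hx : 0 ≤ x) : 0 ≤ P₁.eval x ∧ P₁.eval x ≤ P₂.eval x := by
  have key : ∀ k ≤ n, 0 ≤ P₁.coeff k ∧ P₁.coeff k ≤ P₂.coeff k := by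
    intro k hk
    by_cases hp : Even (n + k)
    · have hparity : (n + k) % 2 = 0 := Nat.even_iff.mp hp
      have h1 : (n - k) / 2 ≤ n / 2 := by omega
      have h2 : n - 2 * ((n - k) / 2) = k := by omega
      refine ⟨?_, ?_⟩
      · have := hpos₁ ((n - k) / 2) h1; rwa [h2] at this
      · have := hle ((n - k) / 2) h1; rwa [h2] at this
    · rw [hz₁ k hp, hz₂ k hp]; exact ⟨le_refl 0, le_refl 0⟩
  rw [Polynomial.eval_eq_sum_range, Polynomial.eval_eq_sum_range, hd₁, hd₂]
  constructor
  · apply Finset.sum_nonneg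
    intro k hk
    have hk' : k ≤ n := by
      simp only [Finset.mem_range] at hk; omega
    exact mul_nonneg (key k hk').1 (pow_nonneg hx k)
  · apply Finset.sum_le_sum
    intro k hk
    have hk' : k ≤ n := by
      simp only [Finset.mem_range] at hk; omega
    exact mul_le_mul_of_nonneg_right (key k hk').2 (pow_nonneg hx k)

lemma roots_re_eq_zero {n : ℕ} (S : Matrix (Fin n) (Fin n) ℝ) (hskew : Sᵀ = -S) :
    ∀ r ∈ (S.charpoly.map (Complex.ofRealHom : ℝ →+* ℂ)).roots, r.re = 0 := by
  intro r hr
  set M : Matrix (Fin n) (Fin n) ℂ := S.map (Complex.ofRealHom : ℝ →+* ℂ) with hM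
  have hchar : M.charpoly = S.charpoly.map (Complex.ofRealHom : ℝ →+* ℂ) :=
    Matrix.charpoly_map S (Complex.ofRealHom : ℝ →+* ℂ)
  have hroot : M.charpoly.eval r = 0 := by
    rw [hchar]
    exact Polynomial.isRoot_of_mem_roots hr
  rw [charpoly_eval'] at hroot
  obtain ⟨v, hv, hmul⟩ := (Matrix.exists_mulVec_eq_zero_iff).mpr hroot
  have hMv : M *ᵥ v = r • v := by
    have h1 : Matrix.scalar (Fin n) r *ᵥ v - M *ᵥ v = 0 := by
      rw [← Matrix.sub_mulVec]; exact hmul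
    have h2 : Matrix.scalar (Fin n) r *ᵥ v = r • v := by
      rw [Matrix.scalar_apply]
      ext i
      simp [Matrix.mulVec_diagonal]
    rw [sub_eq_zero] at h1
    rw [← h1, h2]
  have hMH : Mᴴ = -M := by
    ext i j
    have hs := congrFun (congrFun hskew i) j
    simp only [Matrix.transpose_apply, Matrix.neg_apply] at hs
    simp [hM, Matrix.conjTranspose_apply, Matrix.map_apply, hs]
  set d : ℂ := star v ⬝ᵥ (M *ᵥ v) with hd
  set c : ℂ := star v ⬝ᵥ v with hc
  have hcstar : star c = c := by
    rw [hc]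
    conv_rhs => rw [Matrix.star_dotProduct]
  have hdc : d = r * c := by
    rw [hd, hMv, dotProduct_smul, smul_eq_mul, hc]
  have hds : star d = -d := by
    have h1 : star d = star (M *ᵥ v) ⬝ᵥ v := by
      rw [hd]
      conv_lhs => rw [Matrix.star_dotProduct]
      simp
    rw [h1, Matrix.star_mulVec, hMH, Matrix.vecMul_neg, neg_dotProduct,
      ← Matrix.dotProduct_mulVec, ← hd]
  have hc0 : c ≠ 0 := by
    have hcre : c = ((∑ i, Complex.normSq (v i) : ℝ) : ℂ) := by
      rw [hc]
      simp only [dotProduct, Pi.star_apply, Complex.star_def]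
      push_cast
      refine Finset.sum_congr rfl fun i _ => ?_
      rw [mul_comm, Complex.mul_conj]
    rw [hcre]
    rw [Complex.ofReal_ne_zero]
    obtain ⟨i, hi⟩ := Function.ne_iff.mp hv
    have hpos : 0 < ∑ i, Complex.normSq (v i) := by
      apply Finset.sum_pos' (fun j _ => Complex.normSq_nonneg _)
      exact ⟨i, Finset.mem_univ i, Complex.normSq_pos.mpr hi⟩
    exact ne_of_gt hpos
  have h6 : star r * c = -(r * c) := by
    have h7 : star d = star r * star c := by rw [hdc, star_mul']
    rw [hcstar] at h7
    rw [hdc, star_mul', hcstar] at hds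
    exact hds
  have h8 : (star r + r) * c = 0 := by rw [add_mul, h6]; ring
  have hsum : star r + r = 0 := by
    rcases mul_eq_zero.mp h8 with h | h
    · exact h
    · exact absurd h hc0
  have h9 := congrArg Complex.re hsum
  simp only [Complex.add_re, Complex.zero_re, Complex.star_def, Complex.conj_re] at h9
  linarith

lemma prod_roots_eq {n : ℕ} (S : Matrix (Fin n) (Fin n) ℝ) (hskew : Sᵀ = -S) (x : ℝ) :
    (((S.charpoly.map (Complex.ofRealHom : ℝ →+* ℂ)).roots).map
      (fun r => x ^ 2 + r.im ^ 2)).prod = (S.charpoly.eval x) ^ 2 := by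
  set P := S.charpoly with hP
  set Pc := P.map (Complex.ofRealHom : ℝ →+* ℂ) with hPc
  have hmonic : Pc.Monic := (Matrix.charpoly_monic S).map _
  have hsplits : Pc.Splits := IsAlgClosed.splits Pc
  have hprod : Pc = (Pc.roots.map fun a => X - Polynomial.C a).prod :=
    hsplits.eq_prod_roots_of_monic hmonic
  have heval : Pc.eval (x : ℂ) = (Pc.roots.map fun a => (x : ℂ) - a).prod := by
    conv_lhs => rw [hprod]
    rw [Polynomial.eval_multiset_prod, Multiset.map_map]
    congr 1
    apply Multiset.map_congr rfl
    intro a _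
    simp
  have hevalreal : Pc.eval (x : ℂ) = ((P.eval x : ℝ) : ℂ) := by
    rw [hPc, Polynomial.eval_map]
    exact Polynomial.eval₂_at_apply (Complex.ofRealHom : ℝ →+* ℂ) x
  have hnormSq := congrArg Complex.normSq heval
  rw [hevalreal, Complex.normSq_ofReal, map_multiset_prod, Multiset.map_map] at hnormSq
  have hre := roots_re_eq_zero S hskew
  have hfactor : (Pc.roots.map (Complex.normSq ∘ fun a => (x : ℂ) - a)).prod
      = (Pc.roots.map (fun r => x ^ 2 + r.im ^ 2)).prod := by
    congr 1
    apply Multiset.map_congr rfl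
    intro a ha
    simp only [Function.comp_apply, Complex.normSq_apply, Complex.sub_re, Complex.sub_im,
      Complex.ofReal_re, Complex.ofReal_im, hre a ha]
    ring
  rw [hfactor] at hnormSq
  rw [← hnormSq]
  ring

lemma sum_log_eq (m : Multiset ℝ) (hm : ∀ s ∈ m, 0 ≤ s) (x : ℝ) (hx : 0 < x) :
    (m.map (fun s => Real.log (1 + s / x ^ 2))).sum
      = Real.log ((m.map (fun s => 1 + s / x ^ 2)).prod)
    ∧ 1 ≤ (m.map (fun s => 1 + s / x ^ 2)).prod := by
  induction m using Multiset.induction_on with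
  | empty => simp
  | cons s m ih =>
    have hs : 0 ≤ s := hm s (Multiset.mem_cons_self s m)
    have hm' : ∀ t ∈ m, 0 ≤ t := fun t ht => hm t (Multiset.mem_cons_of_mem ht)
    obtain ⟨ih1, ih2⟩ := ih hm'
    have hs1 : (1:ℝ) ≤ 1 + s / x ^ 2 := by
      have : 0 ≤ s / x ^ 2 := by positivity
      linarith
    simp only [Multiset.map_cons, Multiset.sum_cons, Multiset.prod_cons]
    constructor
    · rw [ih1, ← Real.log_mul (by linarith) (by linarith)]
    · calc (1:ℝ) = 1 * 1 := by ring
        _ ≤ (1 + s / x ^ 2) * (m.map (fun s => 1 + s / x ^ 2)).prod := by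
            apply mul_le_mul hs1 ih2 zero_le_one (by linarith)

end SkewEnergyAux

/-- The skew energy of an oriented graph with skew-adjacency matrix `S`: the sum of the
absolute values of the (complex) eigenvalues of `S`, counted with multiplicity. -/
noncomputable def skewEnergy {n : ℕ} (S : Matrix (Fin n) (Fin n) ℝ) : ℝ :=
  (((S.map (fun x : ℝ => (x : ℂ))).charpoly.roots).map (fun z : ℂ => ‖z‖)).sum

/-- The skew energy is monotone in the coefficients: if two oriented graphs on `n`
vertices have skew characteristic polynomials `∑ a_{2i} λ^{n-2i}` with all `a_{2i} ≥ 0`,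
and `a_{2i}(G₁) ≤ a_{2i}(G₂)` for all `i`, then `E_s(G₁) ≤ E_s(G₂)`. -/
theorem skewEnergy_monotone
    {n : ℕ} (G₁ G₂ : SimpleGraph (Fin n)) [DecidableRel G₁.Adj] [DecidableRel G₂.Adj]
    (S₁ S₂ : Matrix (Fin n) (Fin n) ℝ)
    (hskew₁ : S₁ᵀ = -S₁) (hskew₂ : S₂ᵀ = -S₂)
    (horient₁ : ∀ i j, G₁.Adj i j → S₁ i j = 1 ∨ S₁ i j = -1)
    (hzero₁ : ∀ i j, ¬ G₁.Adj i j → S₁ i j = 0)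
    (horient₂ : ∀ i j, G₂.Adj i j → S₂ i j = 1 ∨ S₂ i j = -1)
    (hzero₂ : ∀ i j, ¬ G₂.Adj i j → S₂ i j = 0)
    (hpos₁ : ∀ i ≤ n / 2, 0 ≤ S₁.charpoly.coeff (n - 2 * i))
    (hpos₂ : ∀ i ≤ n / 2, 0 ≤ S₂.charpoly.coeff (n - 2 * i))
    (hle : ∀ i ≤ n / 2, S₁.charpoly.coeff (n - 2 * i) ≤ S₂.charpoly.coeff (n - 2 * i)) :
    skewEnergy S₁ ≤ skewEnergy S₂ := by
  classical
  open SkewEnergyAux in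
  -- express the skew energy as a sum of square roots of squared imaginary parts of roots
  have energy_eq : ∀ (S : Matrix (Fin n) (Fin n) ℝ), Sᵀ = -S →
      skewEnergy S = ((((S.charpoly.map (Complex.ofRealHom : ℝ →+* ℂ)).roots).map
        (fun r => r.im ^ 2)).map Real.sqrt).sum := by
    intro S hskew
    unfold skewEnergy
    rw [show S.map (fun x : ℝ => (x : ℂ)) = S.map (Complex.ofRealHom : ℝ →+* ℂ) from rfl,
      Matrix.charpoly_map, Multiset.map_map]
    apply congrArg Multiset.sum
    apply Multiset.map_congr rfl
    intro r hr
    have hre := SkewEnergyAux.roots_re_eq_zero S hskew r hr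
    simp only [Function.comp_apply]
    rw [Complex.norm_def, Complex.normSq_apply, hre]
    norm_num [pow_two]
  -- cardinality of root multisets
  have card_eq : ∀ (S : Matrix (Fin n) (Fin n) ℝ),
      Multiset.card (S.charpoly.map (Complex.ofRealHom : ℝ →+* ℂ)).roots = n := by
    intro S
    have hsplits : (S.charpoly.map (Complex.ofRealHom : ℝ →+* ℂ)).Splits :=
      IsAlgClosed.splits _
    rw [Polynomial.splits_iff_card_roots.mp hsplits,
      (Matrix.charpoly_monic S).natDegree_map, Matrix.charpoly_natDegree_eq_dim,
      Fintype.card_fin]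
  set R₁ := (S₁.charpoly.map (Complex.ofRealHom : ℝ →+* ℂ)).roots with hR₁
  set R₂ := (S₂.charpoly.map (Complex.ofRealHom : ℝ →+* ℂ)).roots with hR₂
  set m₁ : Multiset ℝ := R₁.map (fun r => r.im ^ 2) with hm₁
  set m₂ : Multiset ℝ := R₂.map (fun r => r.im ^ 2) with hm₂
  have hm₁pos : ∀ s ∈ m₁, 0 ≤ s := by
    intro s hs
    obtain ⟨r, _, rfl⟩ := Multiset.mem_map.mp hs
    positivity
  have hm₂pos : ∀ s ∈ m₂, 0 ≤ s := by
    intro s hs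
    obtain ⟨r, _, rfl⟩ := Multiset.mem_map.mp hs
    positivity
  rw [energy_eq S₁ hskew₁, energy_eq S₂ hskew₂]
  apply SkewEnergyAux.sum_sqrt_le_sum_sqrt m₁ m₂ hm₁pos hm₂pos
  intro x hx
  have hx2 : (0:ℝ) < x ^ 2 := by positivity
  -- compute the product forms
  have prod_form : ∀ (S : Matrix (Fin n) (Fin n) ℝ), Sᵀ = -S →
      (((S.charpoly.map (Complex.ofRealHom : ℝ →+* ℂ)).roots).map
        (fun r : ℂ => 1 + r.im ^ 2 / x ^ 2)).prod
      = (S.charpoly.eval x) ^ 2 * ((x ^ 2)⁻¹) ^ n := by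
    intro S hskew
    have hcongr : (((S.charpoly.map (Complex.ofRealHom : ℝ →+* ℂ)).roots).map
        (fun r : ℂ => 1 + r.im ^ 2 / x ^ 2))
        = ((S.charpoly.map (Complex.ofRealHom : ℝ →+* ℂ)).roots).map
          (fun r : ℂ => (x ^ 2 + r.im ^ 2) * (x ^ 2)⁻¹) := by
      apply Multiset.map_congr rfl
      intro r _
      field_simp
    rw [hcongr, Multiset.prod_map_mul, SkewEnergyAux.prod_roots_eq S hskew x,
      Multiset.map_const', Multiset.prod_replicate, card_eq S]
  obtain ⟨hlog₁, hge₁⟩ := SkewEnergyAux.sum_log_eq m₁ hm₁pos x hx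
  obtain ⟨hlog₂, hge₂⟩ := SkewEnergyAux.sum_log_eq m₂ hm₂pos x hx
  rw [hlog₁, hlog₂]
  apply Real.log_le_log (by linarith)
  have e₁ : (m₁.map (fun s => 1 + s / x ^ 2)).prod
      = (S₁.charpoly.eval x) ^ 2 * ((x ^ 2)⁻¹) ^ n := by
    rw [hm₁, Multiset.map_map]
    exact prod_form S₁ hskew₁
  have e₂ : (m₂.map (fun s => 1 + s / x ^ 2)).prod
      = (S₂.charpoly.eval x) ^ 2 * ((x ^ 2)⁻¹) ^ n := by
    rw [hm₂, Multiset.map_map]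
    exact prod_form S₂ hskew₂
  rw [e₁, e₂]
  have hdeg₁ : S₁.charpoly.natDegree = n := by
    rw [Matrix.charpoly_natDegree_eq_dim, Fintype.card_fin]
  have hdeg₂ : S₂.charpoly.natDegree = n := by
    rw [Matrix.charpoly_natDegree_eq_dim, Fintype.card_fin]
  obtain ⟨hnn, hevle⟩ := SkewEnergyAux.eval_nonneg_and_le S₁.charpoly S₂.charpoly hdeg₁ hdeg₂
    (SkewEnergyAux.skew_coeff_eq_zero S₁ hskew₁) (SkewEnergyAux.skew_coeff_eq_zero S₂ hskew₂)
    hpos₁ hle hx.le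
  apply mul_le_mul_of_nonneg_right _ (by positivity)
  exact pow_le_pow_left₀ hnn hevle 2
end
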